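/- arXiv:1305.5673 — 9 statements merged into one kernel-verified Lean document; each statement's English description precedes it below -/
import Mathlib

section
/- Let f : [-1/2,1/2] → ℝ be convex and for each integer j ≥ 1 set b_j = 2^{j-1} ∫_{-2^{-j}}^{2^{-j}} f(t) dt − f(0). Then for every integer j ≥ 1 one has 0 ≤ b_{j+1} ≤ (1/2) b_j. -/
open MeasureTheory

section Aux

variable {f : ℝ → ℝ}

private lemma mid_ineq (hf : ConvexOn ℝ (Set.Icc (-(1:ℝ)/2) (1/2)) f)
    {x y : ℝ} (hx : x ∈ Set.Icc (-(1:ℝ)/2) (1/2)) (hy : y ∈ Set.Icc (-(1:ℝ)/2) (1/2)) :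
    f ((x + y) / 2) ≤ (f x + f y) / 2 := by
  have h := hf.2 hx hy (by norm_num : (0:ℝ) ≤ 1/2) (by norm_num : (0:ℝ) ≤ 1/2) (by norm_num)
  simp only [smul_eq_mul] at h
  have hxy : (1/2 : ℝ) * x + (1/2 : ℝ) * y = (x + y) / 2 := by ring
  rw [hxy] at h
  linarith

private lemma conv_bound (hf : ConvexOn ℝ (Set.Icc (-(1:ℝ)/2) (1/2)) f) :
    ∃ M : ℝ, ∀ x ∈ Set.Icc (-(1:ℝ)/2) (1/2), |f x| ≤ M := by
  have hlr : (-(1:ℝ)/2) ≤ (1:ℝ)/2 := by norm_num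
  have hlm : (-(1:ℝ)/2) ∈ Set.Icc (-(1:ℝ)/2) (1/2) := by constructor <;> norm_num
  have hrm : ((1:ℝ)/2) ∈ Set.Icc (-(1:ℝ)/2) (1/2) := by constructor <;> norm_num
  have h0m : (0:ℝ) ∈ Set.Icc (-(1:ℝ)/2) (1/2) := by constructor <;> norm_num
  set M0 : ℝ := max (f (-(1:ℝ)/2)) (f ((1:ℝ)/2)) with hM0
  refine ⟨|M0| + |2 * f 0 - M0|, fun x hx => ?_⟩
  have hxm : x ∈ Set.Icc (-(1:ℝ)/2) (1/2) := hx
  rw [Set.mem_Icc] at hx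
  obtain ⟨hx1, hx2⟩ := hx
  have hnxm : -x ∈ Set.Icc (-(1:ℝ)/2) (1/2) := by
    rw [Set.mem_Icc]; constructor <;> linarith
  have hseg : x ∈ segment ℝ (-(1:ℝ)/2) ((1:ℝ)/2) := by
    rw [segment_eq_Icc hlr]
    exact hxm
  have hup : f x ≤ M0 := hf.le_on_segment hlm hrm hseg
  have hnseg : -x ∈ segment ℝ (-(1:ℝ)/2) ((1:ℝ)/2) := by
    rw [segment_eq_Icc hlr]
    exact hnxm
  have hupn : f (-x) ≤ M0 := hf.le_on_segment hlm hrm hnseg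
  have hmidx : f 0 ≤ (f x + f (-x)) / 2 := by
    have := mid_ineq hf hxm hnxm
    simpa using this
  have hlow : 2 * f 0 - M0 ≤ f x := by linarith
  have h1 : M0 ≤ |M0| := le_abs_self _
  have h2 : -(|2 * f 0 - M0|) ≤ 2 * f 0 - M0 := neg_abs_le _
  rw [abs_le]
  constructor <;> [linarith [abs_nonneg M0]; linarith [abs_nonneg (2 * f 0 - M0)]]

private lemma conv_ii (hf : ConvexOn ℝ (Set.Icc (-(1:ℝ)/2) (1/2)) f)
    {a b : ℝ} (ha : -(1:ℝ)/2 ≤ a) (hab : a ≤ b) (hb : b ≤ 1/2) :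
    IntervalIntegrable f volume a b := by
  obtain ⟨M, hM⟩ := conv_bound hf
  have hcont : ContinuousOn f (Set.Ioo (-(1:ℝ)/2) (1/2)) := by
    have := hf.continuousOn_interior
    rwa [interior_Icc] at this
  have hsub : Set.Ioo a b ⊆ Set.Ioo (-(1:ℝ)/2) (1/2) := Set.Ioo_subset_Ioo ha hb
  have hmble : AEStronglyMeasurable f (volume.restrict (Set.Ioo a b)) :=
    (hcont.mono hsub).aestronglyMeasurable measurableSet_Ioo
  have hbdd : ∀ᵐ t ∂(volume.restrict (Set.Ioo a b)), ‖f t‖ ≤ M := by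
    refine (ae_restrict_iff' measurableSet_Ioo).2 (ae_of_all _ fun t ht => ?_)
    have : t ∈ Set.Icc (-(1:ℝ)/2) (1/2) := by
      obtain ⟨h1, h2⟩ := ht
      constructor <;> [linarith; linarith]
    simpa [Real.norm_eq_abs] using hM t this
  have hIoo : IntegrableOn f (Set.Ioo a b) volume :=
    ⟨hmble, HasFiniteIntegral.restrict_of_bounded M measure_Ioo_lt_top hbdd⟩
  rw [intervalIntegrable_iff, Set.uIoc_of_le hab]
  exact hIoo.congr_set_ae Ioo_ae_eq_Ioc.symm

end Aux

/-- Lemma 1 (first inequality) of Cai, Low and Xia (2013): for a convex function `f` on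
`[-1/2, 1/2]`, the biases `b j = 2^(j-1) * ∫_{-2^{-j}}^{2^{-j}} f(t) dt - f 0` of the local
average estimators are nonnegative and satisfy `b (j+1) ≤ (1/2) * b j` for all `j ≥ 1`. -/
theorem bias_nonneg_and_halving
    (f : ℝ → ℝ) (hf : ConvexOn ℝ (Set.Icc (-(1:ℝ)/2) (1/2)) f)
    (b : ℕ → ℝ)
    (hb : ∀ j : ℕ, 1 ≤ j →
      b j = (2:ℝ) ^ ((j:ℤ) - 1) * (∫ t in (-(2:ℝ) ^ (-(j:ℤ)))..((2:ℝ) ^ (-(j:ℤ))), f t) - f 0) :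
    ∀ j : ℕ, 1 ≤ j → 0 ≤ b (j + 1) ∧ b (j + 1) ≤ (1/2) * b j := by
  intro j hj
  -- Notation
  set h : ℝ := (2:ℝ) ^ (-(j:ℤ)) with hh
  have hhpos : 0 < h := by positivity
  have hhle : h ≤ 1/2 := by
    rw [hh]
    calc (2:ℝ) ^ (-(j:ℤ)) ≤ (2:ℝ) ^ (-(1:ℤ)) := by
          apply zpow_le_zpow_right₀ (by norm_num : (1:ℝ) ≤ 2)
          omega
      _ = 1/2 := by norm_num
  have hmem : ∀ x : ℝ, x ∈ Set.Icc (-h) h → x ∈ Set.Icc (-(1:ℝ)/2) (1/2) := by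
    intro x hx
    obtain ⟨h1, h2⟩ := hx
    constructor <;> [linarith; linarith]
  -- half step
  have hhalf : (2:ℝ) ^ (-((j:ℤ) + 1)) = h / 2 := by
    rw [show (-((j:ℤ) + 1)) = (-(j:ℤ)) + (-1) by ring,
      zpow_add₀ (by norm_num : (2:ℝ) ≠ 0), zpow_neg_one, ← hh]
    ring
  -- interval integrability on subintervals of [-h, h]
  have hii : ∀ a c : ℝ, -h ≤ a → a ≤ c → c ≤ h → IntervalIntegrable f volume a c := by
    intro a c h1 h2 h3
    exact conv_ii hf (by linarith) h2 (by linarith)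
  -- symmetrization
  have hsym : ∀ a : ℝ, 0 ≤ a → a ≤ h →
      (∫ t in (-a)..a, f t) = ∫ t in (0:ℝ)..a, (f t + f (-t)) := by
    intro a h0 hah
    have i1 : IntervalIntegrable f volume (-a) 0 := hii _ _ (by linarith) (by linarith) hhpos.le
    have i2 : IntervalIntegrable f volume 0 a := hii _ _ (by linarith [hhpos]) h0 hah
    have i3 : IntervalIntegrable (fun t => f (-t)) volume 0 a := by
      have := (IntervalIntegrable.iff_comp_neg).1 i1
      simpa using this.symm
    have hsplit : (∫ t in (-a)..a, f t) = (∫ t in (-a)..(0:ℝ), f t) + ∫ t in (0:ℝ)..a, f t :=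
      (intervalIntegral.integral_add_adjacent_intervals i1 i2).symm
    have hneg : (∫ t in (0:ℝ)..a, f (-t)) = ∫ t in (-a)..(0:ℝ), f t := by
      simpa using intervalIntegral.integral_comp_neg (a := (0:ℝ)) (b := a) f
    rw [intervalIntegral.integral_add i2 i3, hsplit, hneg]
    ring
  -- the symmetrized integrand and its integrability
  set G : ℝ → ℝ := fun t => f t + f (-t) with hG
  have hGii : ∀ a : ℝ, 0 ≤ a → a ≤ h → IntervalIntegrable G volume 0 a := by
    intro a h0 hah
    have i1 : IntervalIntegrable f volume (-a) 0 := hii _ _ (by linarith) (by linarith) hhpos.le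
    have i2 : IntervalIntegrable f volume 0 a := hii _ _ (by linarith [hhpos]) h0 hah
    have i3 : IntervalIntegrable (fun t => f (-t)) volume 0 a := by
      have := (IntervalIntegrable.iff_comp_neg).1 i1
      simpa using this.symm
    exact i2.add i3
  set I : ℝ := ∫ t in (0:ℝ)..h, G t with hI
  set I' : ℝ := ∫ t in (0:ℝ)..(h/2), G t with hI'
  -- rewrite the biases
  have hbj : b j = (2:ℝ) ^ ((j:ℤ) - 1) * I - f 0 := by
    rw [hb j hj, ← hh, hsym h hhpos.le le_rfl]
  have hbj1 : b (j + 1) = (2:ℝ) ^ (j:ℤ) * I' - f 0 := by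
    have e1 : ((j + 1 : ℕ) : ℤ) = (j:ℤ) + 1 := by push_cast; ring
    rw [hb (j+1) (by omega)]
    rw [e1]
    rw [show ((j:ℤ) + 1 - 1) = (j:ℤ) by ring, show (-((j:ℤ)+1)) = -((j:ℤ)+1) from rfl, hhalf,
      hsym (h/2) (by linarith) (by linarith)]
  have hPpos : (0:ℝ) < (2:ℝ) ^ (j:ℤ) := by positivity
  have hPh : (2:ℝ) ^ (j:ℤ) * h = 1 := by
    rw [hh, ← zpow_add₀ (by norm_num : (2:ℝ) ≠ 0)]
    simp
  have hP1 : (2:ℝ) ^ ((j:ℤ) - 1) = (2:ℝ) ^ (j:ℤ) / 2 := by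
    rw [zpow_sub₀ (by norm_num : (2:ℝ) ≠ 0)]
    norm_num
  -- Nonnegativity: I' ≥ h * f 0
  have hlow : h * f 0 ≤ I' := by
    have hmono : (∫ t in (0:ℝ)..(h/2), (2 * f 0)) ≤ I' := by
      apply intervalIntegral.integral_mono_on (by linarith) intervalIntegrable_const
        (hGii (h/2) (by linarith) (by linarith))
      intro t ht
      obtain ⟨h1, h2⟩ := ht
      have htm : t ∈ Set.Icc (-(1:ℝ)/2) (1/2) := hmem t ⟨by linarith, by linarith⟩
      have hntm : -t ∈ Set.Icc (-(1:ℝ)/2) (1/2) := by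
        obtain ⟨a1, a2⟩ := htm; constructor <;> [linarith; linarith]
      have := mid_ineq hf htm hntm
      simp only [hG]
      have h0 : (t + -t) / 2 = 0 := by ring
      rw [h0] at this
      linarith
    rw [intervalIntegral.integral_const, smul_eq_mul] at hmono
    calc h * f 0 = (h/2 - 0) * (2 * f 0) := by ring
      _ ≤ I' := hmono
  -- Halving: 2 * I' ≤ I / 2 + h * f 0
  have hkey : 2 * I' ≤ I / 2 + h * f 0 := by
    have hcd : (∫ s in (0:ℝ)..h, G (s / 2)) = 2 * I' := by
      have := intervalIntegral.integral_comp_div (a := (0:ℝ)) (b := h) (c := (2:ℝ)) G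
        (by norm_num)
      rw [this]
      norm_num [hI', smul_eq_mul]
    have hGhalfii : IntervalIntegrable (fun s => G (s / 2)) volume 0 h := by
      have base := (hGii (h/2) (by linarith) (by linarith)).comp_mul_right (c := (2:ℝ)⁻¹)
      have e0 : (0:ℝ) / (2:ℝ)⁻¹ = 0 := by norm_num
      have e1 : (h/2) / (2:ℝ)⁻¹ = h := by ring
      rw [e0, e1] at base
      simpa [div_eq_mul_inv] using base
    have hmono : (∫ s in (0:ℝ)..h, G (s / 2)) ≤ ∫ s in (0:ℝ)..h, (G s / 2 + f 0) := by
      apply intervalIntegral.integral_mono_on hhpos.le hGhalfii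
        (((hGii h hhpos.le le_rfl).div_const 2).add intervalIntegrable_const)
      intro s hs
      obtain ⟨h1, h2⟩ := hs
      have hsm : s ∈ Set.Icc (-(1:ℝ)/2) (1/2) := hmem s ⟨by linarith, h2⟩
      have hnsm : -s ∈ Set.Icc (-(1:ℝ)/2) (1/2) := by
        obtain ⟨a1, a2⟩ := hsm; constructor <;> [linarith; linarith]
      have h0m : (0:ℝ) ∈ Set.Icc (-(1:ℝ)/2) (1/2) := by constructor <;> norm_num
      have e1 : f (s / 2) ≤ (f s + f 0) / 2 := by
        have := mid_ineq hf hsm h0m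
        simpa using this
      have e2 : f (-(s / 2)) ≤ (f (-s) + f 0) / 2 := by
        have := mid_ineq hf hnsm h0m
        have hq : (-s + 0) / 2 = -(s/2) := by ring
        rw [hq] at this
        linarith
      simp only [hG]
      linarith
    have hrhs : (∫ s in (0:ℝ)..h, (G s / 2 + f 0)) = I / 2 + h * f 0 := by
      rw [intervalIntegral.integral_add ((hGii h hhpos.le le_rfl).div_const 2)
        intervalIntegrable_const, intervalIntegral.integral_div,
        intervalIntegral.integral_const, smul_eq_mul, ← hI]
      ring
    rw [hcd, hrhs] at hmono
    exact hmono
  constructor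
  · -- nonnegativity
    rw [hbj1]
    have hle : (2:ℝ) ^ (j:ℤ) * (h * f 0) ≤ (2:ℝ) ^ (j:ℤ) * I' :=
      mul_le_mul_of_nonneg_left hlow hPpos.le
    have he : (2:ℝ) ^ (j:ℤ) * (h * f 0) = f 0 := by rw [← mul_assoc, hPh, one_mul]
    linarith
  · -- halving
    rw [hbj1, hbj, hP1]
    have hm : (2:ℝ) ^ (j:ℤ) * (2 * I') ≤ (2:ℝ) ^ (j:ℤ) * (I / 2 + h * f 0) :=
      mul_le_mul_of_nonneg_left hkey hPpos.le
    have he : (2:ℝ) ^ (j:ℤ) * (h * f 0) = f 0 := by rw [← mul_assoc, hPh, one_mul]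
    have hexp : (2:ℝ) ^ (j:ℤ) * (I / 2 + h * f 0)
        = (2:ℝ) ^ (j:ℤ) * I / 2 + (2:ℝ) ^ (j:ℤ) * (h * f 0) := by ring
    rw [hexp, he] at hm
    linarith
end

section
/- Let f : [-1/2,1/2] → ℝ be convex and for each integer j ≥ 1 set b_j = 2^{j-1} ∫_{-2^{-j}}^{2^{-j}} f(t) dt − f(0). Then for every integer j ≥ 1 one has b_j − 3 b_{j+1} + 2 b_{j+2} ≥ 0. -/
open MeasureTheory

lemma convexOn_intervalIntegrable {f : ℝ → ℝ} {a b : ℝ} (hab : a ≤ b)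
    (hf : ConvexOn ℝ (Set.Icc a b) f) : IntervalIntegrable f volume a b := by
  have hcont : ContinuousOn f (Set.Ioo a b) := by
    have := hf.continuousOn_interior
    rwa [interior_Icc] at this
  set K : ℝ := max (f a) (f b) with hK
  set L : ℝ := 2 * f ((a + b) / 2) - K with hL
  have hmem : ∀ x ∈ Set.Icc a b, L ≤ f x ∧ f x ≤ K := by
    intro x hx
    have ha : a ∈ Set.Icc a b := ⟨le_refl a, hab⟩
    have hb' : b ∈ Set.Icc a b := ⟨hab, le_refl b⟩
    have hup : f x ≤ K := by
      have : x ∈ segment ℝ a b := by rwa [segment_eq_Icc hab]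
      exact hf.le_on_segment ha hb' this
    refine ⟨?_, hup⟩
    have hy : a + b - x ∈ Set.Icc a b := by
      constructor <;> [linarith [hx.2]; linarith [hx.1]]
    have hyup : f (a + b - x) ≤ K := by
      have : a + b - x ∈ segment ℝ a b := by rwa [segment_eq_Icc hab]
      exact hf.le_on_segment ha hb' this
    have hmid := hf.2 hx hy (by norm_num : (0:ℝ) ≤ 1/2) (by norm_num : (0:ℝ) ≤ 1/2)
      (by norm_num)
    have heq : (1/2 : ℝ) • x + (1/2 : ℝ) • (a + b - x) = (a + b) / 2 := by
      simp [smul_eq_mul]; ring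
    rw [heq] at hmid
    simp only [smul_eq_mul] at hmid
    rw [hL]; linarith
  rw [intervalIntegrable_iff_integrableOn_Ioc_of_le hab]
  refine ⟨?_, ?_⟩
  · have h1 : AEStronglyMeasurable f (volume.restrict (Set.Ioo a b)) :=
      hcont.aestronglyMeasurable measurableSet_Ioo
    rwa [Measure.restrict_congr_set Ioo_ae_eq_Ioc] at h1
  · apply HasFiniteIntegral.restrict_of_bounded (C := max K (-L)) measure_Ioc_lt_top
    refine ae_restrict_of_forall_mem measurableSet_Ioc ?_
    intro x hx
    obtain ⟨h1, h2⟩ := hmem x (Set.Ioc_subset_Icc_self hx)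
    rw [Real.norm_eq_abs, abs_le]
    constructor
    · have := le_max_right K (-L); linarith
    · exact le_trans h2 (le_max_left _ _)

/-- Lemma 1 (second inequality) of Cai, Low and Xia (2013): for a convex function `f` on
`[-1/2, 1/2]`, the biases `b j = 2^(j-1) * ∫_{-2^{-j}}^{2^{-j}} f(t) dt - f 0` of the local
average estimators satisfy `b j - 3 * b (j+1) + 2 * b (j+2) ≥ 0` for all `j ≥ 1`. -/
theorem bias_convex_combination_ineq
    (f : ℝ → ℝ) (hf : ConvexOn ℝ (Set.Icc (-(1:ℝ)/2) (1/2)) f)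
    (b : ℕ → ℝ)
    (hb : ∀ j : ℕ, 1 ≤ j →
      b j = (2:ℝ) ^ ((j:ℤ) - 1) * (∫ t in (-(2:ℝ) ^ (-(j:ℤ)))..((2:ℝ) ^ (-(j:ℤ))), f t) - f 0) :
    ∀ j : ℕ, 1 ≤ j → 0 ≤ b j - 3 * b (j + 1) + 2 * b (j + 2) := by
  intro j hj
  set n : ℤ := (j : ℤ) with hn
  set h : ℝ := (2:ℝ) ^ (-n) with hh
  have h2ne : (2:ℝ) ≠ 0 := by norm_num
  have hpos : 0 < h := zpow_pos (by norm_num) _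
  have hhalf : h ≤ 1/2 := by
    have hn1 : (1:ℤ) ≤ n := by simp only [hn]; exact_mod_cast hj
    calc h = (2:ℝ) ^ (-n) := rfl
      _ ≤ (2:ℝ) ^ (-1 : ℤ) := by
          apply zpow_le_zpow_right₀ (by norm_num) (by omega)
      _ = 1/2 := by norm_num
  -- rewrite the three b's
  have e1 : (((j+1 : ℕ)) : ℤ) = n + 1 := by push_cast; ring
  have e2 : (((j+2 : ℕ)) : ℤ) = n + 2 := by push_cast; ring
  have hb1 := hb j hj
  have hb2 := hb (j+1) (by omega)
  have hb3 := hb (j+2) (by omega)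
  rw [e1] at hb2
  rw [e2] at hb3
  have hpow2 : (2:ℝ) ^ (-(n+1)) = h / 2 := by
    rw [neg_add, zpow_add₀ h2ne, hh]
    norm_num
    ring
  have hpow4 : (2:ℝ) ^ (-(n+2)) = h / 4 := by
    rw [neg_add, zpow_add₀ h2ne, hh]
    norm_num
    ring
  rw [hpow2] at hb2
  rw [hpow4] at hb3
  -- exponent bookkeeping
  have c1 : (2:ℝ) ^ (n + 1 - 1) = 2 * (2:ℝ) ^ (n - 1) := by
    rw [show n + 1 - 1 = (n - 1) + 1 by ring, zpow_add_one₀ h2ne]; ring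
  have c2 : (2:ℝ) ^ (n + 2 - 1) = 4 * (2:ℝ) ^ (n - 1) := by
    rw [show n + 2 - 1 = (n - 1) + 2 by ring, zpow_add₀ h2ne]; norm_num; ring
  rw [c1] at hb2; rw [c2] at hb3
  -- convexity on subintervals
  have hsub : ∀ c : ℝ, 0 < c → c ≤ 1/2 → ConvexOn ℝ (Set.Icc (-c) c) f := by
    intro c hc hc2
    apply hf.subset _ (convex_Icc _ _)
    intro x hx
    constructor
    · have := hx.1; linarith
    · have := hx.2; linarith
  have I1 : IntervalIntegrable f volume (-h) h :=
    convexOn_intervalIntegrable (by linarith) (hsub h hpos hhalf)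
  have I2 : IntervalIntegrable f volume (-(h/2)) (h/2) :=
    convexOn_intervalIntegrable (by linarith) (hsub (h/2) (by linarith) (by linarith))
  have I3 : IntervalIntegrable f volume (-(h/4)) (h/4) :=
    convexOn_intervalIntegrable (by linarith) (hsub (h/4) (by linarith) (by linarith))
  -- integrability of compositions
  have J2 : IntervalIntegrable (fun x => f (x / 2)) volume (-h) h := by
    have := I2.comp_mul_right (c := 1/2)
    rw [show -(h/2) / (1/2) = -h by ring, show h/2 / (1/2) = h by ring] at this
    simpa only [mul_one_div] using this
  have J4 : IntervalIntegrable (fun x => f (x / 4)) volume (-h) h := by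
    have := I3.comp_mul_right (c := 1/4)
    rw [show -(h/4) / (1/4) = -h by ring, show h/4 / (1/4) = h by ring] at this
    simpa only [mul_one_div] using this
  -- substitution identities
  have S2 : (∫ x in (-h)..h, f (x / 2)) = 2 * ∫ x in (-(h/2))..(h/2), f x := by
    rw [intervalIntegral.integral_comp_div (c := 2) f (by norm_num)]
    rw [smul_eq_mul, neg_div]
  have S4 : (∫ x in (-h)..h, f (x / 4)) = 4 * ∫ x in (-(h/4))..(h/4), f x := by
    rw [intervalIntegral.integral_comp_div (c := 4) f (by norm_num)]
    rw [smul_eq_mul, neg_div]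
  -- nonnegativity of the combined integral
  have key : 0 ≤ ∫ x in (-h)..h, (f x - 3 * f (x / 2) + 2 * f (x / 4)) := by
    apply intervalIntegral.integral_nonneg (by linarith)
    intro x hx
    have hx1 : x ∈ Set.Icc (-(1:ℝ)/2) (1/2) := by
      constructor
      · have := hx.1; rw [show -(1:ℝ)/2 = -(1/2) by ring]; linarith
      · have := hx.2; linarith
    have hx4 : x / 4 ∈ Set.Icc (-(1:ℝ)/2) (1/2) := by
      constructor
      · have := hx.1; rw [show -(1:ℝ)/2 = -(1/2) by ring]; linarith
      · have := hx.2; linarith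
    have hcv := hf.2 hx1 hx4 (by norm_num : (0:ℝ) ≤ 1/3) (by norm_num : (0:ℝ) ≤ 2/3)
      (by norm_num)
    have heq : (1/3 : ℝ) • x + (2/3 : ℝ) • (x / 4) = x / 2 := by
      simp [smul_eq_mul]; ring
    rw [heq] at hcv
    simp only [smul_eq_mul] at hcv
    linarith
  -- combine
  have split : (∫ x in (-h)..h, (f x - 3 * f (x / 2) + 2 * f (x / 4)))
      = (∫ x in (-h)..h, f x) - 3 * (∫ x in (-h)..h, f (x / 2))
        + 2 * (∫ x in (-h)..h, f (x / 4)) := by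
    rw [intervalIntegral.integral_add (I1.sub (J2.const_mul 3)) (J4.const_mul 2),
        intervalIntegral.integral_sub I1 (J2.const_mul 3),
        intervalIntegral.integral_const_mul, intervalIntegral.integral_const_mul]
  rw [split, S2, S4] at key
  have hpow : (0:ℝ) < (2:ℝ) ^ (n - 1) := zpow_pos (by norm_num) _
  rw [hb1, hb2, hb3]
  nlinarith [key, hpow]
end

section
/- Let f : [-1/2,1/2] → ℝ be convex and define g : [0,1/2] → ℝ by g(0) = 0 and g(x) = (1/(2x)) ∫_{-x}^{x} (f(t) − f(0)) dt for 0 < x ≤ 1/2. Then g is convex on [0,1/2]. -/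
open MeasureTheory

/-- Key step in the proof of Lemma 1 of Cai, Low and Xia (2013): if `f` is convex on
`[-1/2, 1/2]` then the averaged function `g` with `g 0 = 0` and
`g x = (1/(2x)) * ∫_{-x}^{x} (f t - f 0) dt` for `0 < x ≤ 1/2` is convex on `[0, 1/2]`. -/
theorem averaged_convex_is_convex
    (f g : ℝ → ℝ) (hf : ConvexOn ℝ (Set.Icc (-(1:ℝ)/2) (1/2)) f)
    (hg0 : g 0 = 0)
    (hg : ∀ x : ℝ, 0 < x → x ≤ 1/2 → g x = (1/(2*x)) * ∫ t in (-x)..x, (f t - f 0)) :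
    ConvexOn ℝ (Set.Icc (0:ℝ) (1/2)) g := by
  have hmem0 : (0:ℝ) ∈ Set.Icc (-(1:ℝ)/2) (1/2) := by constructor <;> norm_num
  -- bound on |f|
  obtain ⟨C, hC⟩ : ∃ C, ∀ t ∈ Set.Icc (-(1:ℝ)/2) (1/2), |f t| ≤ C := by
    set M := max (f (-(1:ℝ)/2)) (f ((1:ℝ)/2)) with hM
    refine ⟨max M (M - 2 * f 0), fun t ht => ?_⟩
    have htneg : -t ∈ Set.Icc (-(1:ℝ)/2) (1/2) := by
      constructor <;> [linarith [ht.2]; linarith [ht.1]]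
    have hup : ∀ s ∈ Set.Icc (-(1:ℝ)/2) (1/2), f s ≤ M := by
      intro s hs
      have hseg : s ∈ segment ℝ (-(1:ℝ)/2) ((1:ℝ)/2) := by
        rw [segment_eq_Icc (by norm_num)]
        exact hs
      exact hf.le_on_segment (x := -(1:ℝ)/2) (y := (1:ℝ)/2)
        (Set.left_mem_Icc.mpr (by norm_num)) (Set.right_mem_Icc.mpr (by norm_num)) hseg
    have h1 : f t ≤ M := hup t ht
    have h2 : f 0 ≤ (f t + f (-t)) / 2 := by
      have := hf.2 ht htneg (show (0:ℝ) ≤ 1/2 by norm_num) (show (0:ℝ) ≤ 1/2 by norm_num)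
        (show (1:ℝ)/2 + 1/2 = 1 by norm_num)
      simp only [smul_eq_mul] at this
      have h0 : (1/2 : ℝ) * t + (1/2 : ℝ) * (-t) = 0 := by ring
      rw [h0] at this
      linarith
    have h3 : f (-t) ≤ M := hup _ htneg
    rw [abs_le]
    constructor
    · have hl : 2 * f 0 - M ≤ f t := by linarith
      linarith [le_max_right M (M - 2 * f 0)]
    · exact h1.trans (le_max_left _ _)
  -- continuity of f on the open interval
  have hcont : ContinuousOn f (Set.Ioo (-(1:ℝ)/2) (1/2)) :=
    (hf.subset Set.Ioo_subset_Icc_self (convex_Ioo _ _)).continuousOn isOpen_Ioo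
  -- interval integrability of f on subintervals
  have hfi : ∀ a b : ℝ, -(1:ℝ)/2 ≤ a → a ≤ b → b ≤ 1/2 → IntervalIntegrable f volume a b := by
    intro a b ha hab hb
    rw [intervalIntegrable_iff_integrableOn_Ioo_of_le hab]
    have hsub : Set.Ioo a b ⊆ Set.Ioo (-(1:ℝ)/2) (1/2) := Set.Ioo_subset_Ioo ha hb
    refine ⟨(hcont.mono hsub).aestronglyMeasurable measurableSet_Ioo, ?_⟩
    apply HasFiniteIntegral.restrict_of_bounded (C := C)
    · exact measure_Ioo_lt_top
    · filter_upwards [ae_restrict_mem measurableSet_Ioo] with x hx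
      exact hC x (Set.Ioo_subset_Icc_self (hsub hx))
  -- the symmetrized function
  set φ : ℝ → ℝ := fun s => (f s + f (-s)) / 2 - f 0 with hφdef
  have hφ0 : φ 0 = 0 := by simp [hφdef]
  -- convexity of φ
  have hφconv : ∀ x ∈ Set.Icc (-(1:ℝ)/2) (1/2), ∀ y ∈ Set.Icc (-(1:ℝ)/2) (1/2),
      ∀ a b : ℝ, 0 ≤ a → 0 ≤ b → a + b = 1 → φ (a * x + b * y) ≤ a * φ x + b * φ y := by
    intro x hx y hy a b ha hb hab
    have hxneg : -x ∈ Set.Icc (-(1:ℝ)/2) (1/2) := by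
      constructor <;> [linarith [hx.2]; linarith [hx.1]]
    have hyneg : -y ∈ Set.Icc (-(1:ℝ)/2) (1/2) := by
      constructor <;> [linarith [hy.2]; linarith [hy.1]]
    have h1 := hf.2 hx hy ha hb hab
    have h2 := hf.2 hxneg hyneg ha hb hab
    simp only [smul_eq_mul] at h1 h2
    have hneg : a * (-x) + b * (-y) = -(a * x + b * y) := by ring
    rw [hneg] at h2
    simp only [hφdef]
    have : a * ((f x + f (-x))/2 - f 0) + b * ((f y + f (-y))/2 - f 0)
        = (a * f x + b * f y + (a * f (-x) + b * f (-y))) / 2 - (a + b) * f 0 := by ring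
    rw [this, hab]
    linarith
  -- integrability of φ
  have hφi : ∀ x : ℝ, 0 < x → x ≤ 1/2 → IntervalIntegrable φ volume 0 x := by
    intro x hx hx2
    have h1 : IntervalIntegrable f volume 0 x := hfi 0 x (by norm_num) hx.le hx2
    have h2 : IntervalIntegrable (fun s => f (-s)) volume 0 x := by
      have := hfi (-x) 0 (by linarith) (by linarith) (by norm_num)
      have := ((IntervalIntegrable.iff_comp_neg).mp this).symm
      simpa using this
    exact ((h1.add h2).div_const 2).sub intervalIntegrable_const
  -- representation: g x = ∫ t in 0..1, φ (t * x)  for x ∈ [0, 1/2]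
  have hrep : ∀ x : ℝ, 0 ≤ x → x ≤ 1/2 → g x = ∫ t in (0:ℝ)..1, φ (t * x) := by
    intro x hx hx2
    rcases eq_or_lt_of_le hx with h0 | hxpos
    · rw [← h0, hg0]
      simp [hφ0]
    · rw [hg x hxpos hx2]
      have hxne : x ≠ 0 := ne_of_gt hxpos
      rw [intervalIntegral.integral_comp_mul_right φ hxne]
      simp only [zero_mul, one_mul, smul_eq_mul]
      -- ∫ s in 0..x, φ s = (1/2) * ∫ t in -x..x, (f t - f 0)
      have h1 : IntervalIntegrable f volume 0 x := hfi 0 x (by norm_num) hx hx2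
      have h1' : IntervalIntegrable (fun t => f t - f 0) volume 0 x :=
        h1.sub intervalIntegrable_const
      have h2 : IntervalIntegrable (fun t => f t - f 0) volume (-x) 0 :=
        (hfi (-x) 0 (by linarith) (by linarith) (by norm_num)).sub intervalIntegrable_const
      have hsplit : (∫ t in (-x)..x, (f t - f 0))
          = (∫ t in (-x)..(0:ℝ), (f t - f 0)) + ∫ t in (0:ℝ)..x, (f t - f 0) :=
        (intervalIntegral.integral_add_adjacent_intervals h2 h1').symm
      have hneg : (∫ t in (-x)..(0:ℝ), (f t - f 0)) = ∫ t in (0:ℝ)..x, (f (-t) - f 0) := by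
        rw [intervalIntegral.integral_comp_neg (fun t => f t - f 0)]
        norm_num
      have h2' : IntervalIntegrable (fun t => f (-t) - f 0) volume 0 x := by
        have := ((IntervalIntegrable.iff_comp_neg).mp h2).symm
        simpa using this
      have hφeq : ∀ t : ℝ, φ t = ((f t - f 0) + (f (-t) - f 0)) / 2 := by
        intro t; simp only [hφdef]; ring
      have hφint : (∫ s in (0:ℝ)..x, φ s)
          = ((∫ t in (0:ℝ)..x, (f t - f 0)) + ∫ t in (0:ℝ)..x, (f (-t) - f 0)) / 2 := by
        simp_rw [hφeq]
        rw [intervalIntegral.integral_div, intervalIntegral.integral_add h1' h2']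
      rw [hφint, hsplit, hneg]
      field_simp
      ring
  -- integrability of t ↦ φ (t * x) on [0,1]
  have hφxi : ∀ x : ℝ, 0 ≤ x → x ≤ 1/2 → IntervalIntegrable (fun t => φ (t * x)) volume 0 1 := by
    intro x hx hx2
    rcases eq_or_lt_of_le hx with h0 | hxpos
    · simp only [← h0, mul_zero]
      exact intervalIntegrable_const
    · have := (hφi x hxpos hx2).comp_mul_right (c := x)
      simpa [ne_of_gt hxpos] using this
  -- now prove convexity
  refine ⟨convex_Icc _ _, ?_⟩
  intro x hx y hy a b ha hb hab
  have hxy : a • x + b • y ∈ Set.Icc (0:ℝ) (1/2) :=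
    (convex_Icc (0:ℝ) (1/2)) hx hy ha hb hab
  simp only [smul_eq_mul] at hxy ⊢
  rw [hrep x hx.1 hx.2, hrep y hy.1 hy.2, hrep _ hxy.1 hxy.2]
  have hix := hφxi x hx.1 hx.2
  have hiy := hφxi y hy.1 hy.2
  have hcomb : (∫ t in (0:ℝ)..1, (a * φ (t * x) + b * φ (t * y)))
      = a * (∫ t in (0:ℝ)..1, φ (t * x)) + b * ∫ t in (0:ℝ)..1, φ (t * y) := by
    rw [intervalIntegral.integral_add (hix.const_mul a) (hiy.const_mul b),
      intervalIntegral.integral_const_mul, intervalIntegral.integral_const_mul]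
  rw [← hcomb]
  apply intervalIntegral.integral_mono_on (by norm_num)
    (hφxi _ hxy.1 hxy.2) ((hix.const_mul a).add (hiy.const_mul b))
  intro t ht
  have htx : t * x ∈ Set.Icc (-(1:ℝ)/2) (1/2) := by
    constructor
    · nlinarith [ht.1, ht.2, hx.1, hx.2]
    · nlinarith [ht.1, ht.2, hx.1, hx.2]
  have hty : t * y ∈ Set.Icc (-(1:ℝ)/2) (1/2) := by
    constructor
    · nlinarith [ht.1, ht.2, hy.1, hy.2]
    · nlinarith [ht.1, ht.2, hy.1, hy.2]
  have := hφconv (t * x) htx (t * y) hty a b ha hb hab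
  have heq : a * (t * x) + b * (t * y) = t * (a * x + b * y) := by ring
  rw [heq] at this
  exact this
end

section
/- Let n ≥ 1 be an integer, let f : [-1/2,1/2] → ℝ be convex, and set f_s(x) = (f(x)+f(−x))/2 − f(0). For integers j ≥ 1 with 2^{j-1} ≤ n define D_j = 2^{-(j-1)} Σ_{k=1}^{2^{j-1}} f_s(k/(2n)), and for j ≥ 2 define T_j = D_j − D_{j-1}. Then for every integer j with j ≥ 2 and 2^j ≤ n one has 2 T_j ≤ T_{j+1}. -/
open MeasureTheory Finset

/-- Lemma 2 (first inequality) of Cai, Low and Xia (2013), regression model: for a convex `f` on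
`[-1/2, 1/2]`, with `f_s x = (f x + f (-x))/2 - f 0`, the biases
`D j = 2^{-(j-1)} ∑_{k=1}^{2^{j-1}} f_s (k/(2n))` and differences `T j = D j - D (j-1)`
satisfy `2 * T j ≤ T (j+1)` for every `j ≥ 2` with `2^j ≤ n`. -/
theorem regression_bias_difference_doubling
    (n : ℕ) (hn : 1 ≤ n)
    (f : ℝ → ℝ) (hf : ConvexOn ℝ (Set.Icc (-(1:ℝ)/2) (1/2)) f)
    (fs : ℝ → ℝ) (hfs : ∀ x : ℝ, fs x = (f x + f (-x))/2 - f 0)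
    (D T : ℕ → ℝ)
    (hD : ∀ j : ℕ, 1 ≤ j → 2 ^ (j - 1) ≤ n →
      D j = (2:ℝ) ^ (1 - (j:ℤ)) * ∑ k ∈ Finset.Icc (1:ℕ) (2 ^ (j - 1)), fs ((k:ℝ)/(2*(n:ℝ))))
    (hT : ∀ j : ℕ, 2 ≤ j → T j = D j - D (j - 1)) :
    ∀ j : ℕ, 2 ≤ j → 2 ^ j ≤ n → 2 * T j ≤ T (j + 1) := by
  intro j hj hjn
  have hn0 : (0:ℝ) < 2*(n:ℝ) := by positivity
  -- midpoint convexity of fs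
  have hfsmid : ∀ u v : ℝ, u ∈ Set.Icc (-(1:ℝ)/2) (1/2) → v ∈ Set.Icc (-(1:ℝ)/2) (1/2) →
      fs ((u+v)/2) ≤ (fs u + fs v)/2 := by
    intro u v hu hv
    have hu' : -u ∈ Set.Icc (-(1:ℝ)/2) (1/2) := by
      simp only [Set.mem_Icc] at hu ⊢; constructor <;> linarith [hu.1, hu.2]
    have hv' : -v ∈ Set.Icc (-(1:ℝ)/2) (1/2) := by
      simp only [Set.mem_Icc] at hv ⊢; constructor <;> linarith [hv.1, hv.2]
    have h1 := hf.2 hu hv (by norm_num : (0:ℝ) ≤ 1/2) (by norm_num : (0:ℝ) ≤ 1/2)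
      (by norm_num : (1:ℝ)/2 + 1/2 = 1)
    have h2 := hf.2 hu' hv' (by norm_num : (0:ℝ) ≤ 1/2) (by norm_num : (0:ℝ) ≤ 1/2)
      (by norm_num : (1:ℝ)/2 + 1/2 = 1)
    simp only [smul_eq_mul] at h1 h2
    have e1 : (1:ℝ)/2 * u + 1/2 * v = (u+v)/2 := by ring
    have e2 : (1:ℝ)/2 * (-u) + 1/2 * (-v) = -((u+v)/2) := by ring
    rw [e1] at h1; rw [e2] at h2
    simp only [hfs]; linarith
  -- key pointwise convexity inequality at grid points
  have key : ∀ a b c : ℕ, 2*b = a + c → a ≤ c → c ≤ n →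
      2 * fs ((b:ℝ)/(2*(n:ℝ))) ≤ fs ((a:ℝ)/(2*(n:ℝ))) + fs ((c:ℝ)/(2*(n:ℝ))) := by
    intro a b c habc hac0 hc
    have ha : a ≤ n := by omega
    have mem : ∀ k : ℕ, k ≤ n → (k:ℝ)/(2*(n:ℝ)) ∈ Set.Icc (-(1:ℝ)/2) (1/2) := by
      intro k hk
      have hk' : (k:ℝ) ≤ n := by exact_mod_cast hk
      constructor
      · have : (0:ℝ) ≤ (k:ℝ)/(2*n) := by positivity
        linarith
      · rw [div_le_iff₀ hn0]; linarith
    have h := hfsmid _ _ (mem a ha) (mem c hc)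
    have hac : (a:ℝ) + c = 2*(b:ℝ) := by exact_mod_cast habc.symm
    have e : ((a:ℝ)/(2*(n:ℝ)) + (c:ℝ)/(2*(n:ℝ)))/2 = (b:ℝ)/(2*(n:ℝ)) := by
      rw [← add_div]
      rw [hac]
      field_simp
    rw [e] at h
    linarith
  -- abbreviations
  set m : ℕ := 2 ^ (j - 2) with hm
  have hm1 : 1 ≤ m := Nat.one_le_two_pow
  have h2m : 2 ^ (j - 1) = 2 * m := by
    rw [hm, ← pow_succ']
    congr 1
    omega
  have h4m : 2 ^ j = 4 * m := by
    have h : 2 ^ j = 2 * 2 ^ (j - 1) := by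
      rw [← pow_succ']
      congr 1
      omega
    rw [h, h2m]
    ring
  have h4mn : 4 * m ≤ n := by rw [← h4m]; exact hjn
  -- block sums
  set A : ℝ := ∑ i ∈ Finset.range m, fs (((1 + i : ℕ):ℝ)/(2*(n:ℝ))) with hA
  set B : ℝ := ∑ i ∈ Finset.range m, fs (((1 + (m + i) : ℕ):ℝ)/(2*(n:ℝ))) with hB
  set C : ℝ := ∑ i ∈ Finset.range m, fs (((1 + (2*m + i) : ℕ):ℝ)/(2*(n:ℝ))) with hC
  set E : ℝ := ∑ i ∈ Finset.range m, fs (((1 + (3*m + i) : ℕ):ℝ)/(2*(n:ℝ))) with hE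
  -- splitting Icc sums
  have icc_to_range : ∀ N : ℕ, (∑ k ∈ Finset.Icc (1:ℕ) N, fs ((k:ℝ)/(2*(n:ℝ))))
      = ∑ i ∈ Finset.range N, fs (((1 + i : ℕ):ℝ)/(2*(n:ℝ))) := by
    intro N
    rw [← Finset.Ico_add_one_right_eq_Icc, Finset.sum_Ico_eq_sum_range]
    simp
  have split : ∀ a N₁ N₂ : ℕ,
      (∑ i ∈ Finset.range (N₁ + N₂), fs (((1 + (a + i) : ℕ):ℝ)/(2*(n:ℝ))))
      = (∑ i ∈ Finset.range N₁, fs (((1 + (a + i) : ℕ):ℝ)/(2*(n:ℝ))))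
        + ∑ i ∈ Finset.range N₂, fs (((1 + ((a + N₁) + i) : ℕ):ℝ)/(2*(n:ℝ))) := by
    intro a N₁ N₂
    rw [Finset.sum_range_add]
    congr 1
    apply Finset.sum_congr rfl
    intro i _
    congr 2
    push_cast
    ring
  have S1 : (∑ k ∈ Finset.Icc (1:ℕ) m, fs ((k:ℝ)/(2*(n:ℝ)))) = A := icc_to_range m
  have S2 : (∑ k ∈ Finset.Icc (1:ℕ) (2*m), fs ((k:ℝ)/(2*(n:ℝ)))) = A + B := by
    rw [icc_to_range (2*m)]
    have h2 : 2*m = m + m := by ring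
    rw [h2]
    have := split 0 m m
    simp only [Nat.zero_add, zero_add] at this
    rw [this, hA, hB]
  have S4 : (∑ k ∈ Finset.Icc (1:ℕ) (4*m), fs ((k:ℝ)/(2*(n:ℝ)))) = A + B + C + E := by
    rw [icc_to_range (4*m)]
    have h2 : 4*m = (m + m) + (m + m) := by ring
    rw [h2]
    have t1 := split 0 (m + m) (m + m)
    simp only [Nat.zero_add, zero_add] at t1
    rw [t1]
    have t2 := split 0 m m
    simp only [Nat.zero_add, zero_add] at t2
    have t3 := split (m + m) m m
    rw [t2, t3]
    have e1 : m + m = 2*m := by ring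
    rw [e1]
    have e2 : 2*m + m = 3*m := by ring
    rw [e2]
    rw [hA, hB, hC, hE]
    ring
  -- termwise convexity inequalities summed
  have hBC : 2 * B ≤ A + C := by
    rw [hA, hB, hC, ← Finset.sum_add_distrib, Finset.mul_sum]
    apply Finset.sum_le_sum
    intro i hi
    have hi' : i < m := Finset.mem_range.mp hi
    exact key (1 + i) (1 + (m + i)) (1 + (2*m + i)) (by omega) (by omega) (by omega)
  have hCE : 2 * C ≤ B + E := by
    rw [hB, hC, hE, ← Finset.sum_add_distrib, Finset.mul_sum]
    apply Finset.sum_le_sum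
    intro i hi
    have hi' : i < m := Finset.mem_range.mp hi
    exact key (1 + (m + i)) (1 + (2*m + i)) (1 + (3*m + i)) (by omega) (by omega) (by omega)
  -- evaluate D
  have hc : (0:ℝ) < (2:ℝ) ^ (-(j:ℤ)) := by positivity
  have hDj : D j = 2 * (2:ℝ) ^ (-(j:ℤ)) * (A + B) := by
    rw [hD j (by omega) (by omega), h2m, S2]
    have : (1 - (j:ℤ)) = 1 + (-(j:ℤ)) := by ring
    rw [this, zpow_add₀ (by norm_num : (2:ℝ) ≠ 0), zpow_one]
  have hDjm : D (j - 1) = 4 * (2:ℝ) ^ (-(j:ℤ)) * A := by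
    rw [hD (j-1) (by omega) (by rw [show j - 1 - 1 = j - 2 by omega, ← hm]; omega)]
    rw [show j - 1 - 1 = j - 2 by omega, ← hm, S1]
    have hcast : ((j - 1 : ℕ) : ℤ) = (j:ℤ) - 1 := by
      have : (1:ℕ) ≤ j := by omega
      omega
    rw [hcast]
    have : (1 - ((j:ℤ) - 1)) = 2 + (-(j:ℤ)) := by ring
    rw [this, zpow_add₀ (by norm_num : (2:ℝ) ≠ 0)]
    norm_num
  have hDjp : D (j + 1) = (2:ℝ) ^ (-(j:ℤ)) * (A + B + C + E) := by
    rw [hD (j+1) (by omega) (by simpa using hjn)]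
    rw [show j + 1 - 1 = j from rfl, h4m, S4]
    have hcast : ((j + 1 : ℕ) : ℤ) = (j:ℤ) + 1 := by push_cast; ring
    rw [hcast]
    congr 1
    congr 1
    ring
  have hTj := hT j hj
  have hTjp := hT (j+1) (by omega)
  rw [show j + 1 - 1 = j from rfl] at hTjp
  rw [hTj, hTjp, hDj, hDjm, hDjp]
  nlinarith [hc, hBC, hCE, mul_pos hc hc]
end

section
/- Let n ≥ 1 be an integer, let f : [-1/2,1/2] → ℝ be convex, and set f_s(x) = (f(x)+f(−x))/2 − f(0). For integers j ≥ 1 with 2^{j-1} ≤ n define D_j = 2^{-(j-1)} Σ_{k=1}^{2^{j-1}} f_s(k/(2n)). Then for every integer j with j ≥ 1 and 2^j ≤ n one has 0 ≤ D_j ≤ ((2^{j-1}+1)/(2^j+1)) D_{j+1}. -/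
open MeasureTheory Finset

private lemma gauss_real (m : ℕ) :
    ∑ k ∈ Finset.Icc (1:ℕ) m, (k:ℝ) = (m:ℝ) * ((m:ℝ) + 1) / 2 := by
  induction m with
  | zero => simp
  | succ m ih =>
      rw [Finset.sum_Icc_succ_top (Nat.one_le_iff_ne_zero.mpr (Nat.succ_ne_zero m)), ih]
      push_cast
      ring

private lemma Icc_one_eq_Ioc_zero (m : ℕ) : Finset.Icc 1 m = Finset.Ioc 0 m := by
  ext x
  simp only [Finset.mem_Icc, Finset.mem_Ioc]
  omega

/-- Lemma 2 (second inequality) of Cai, Low and Xia (2013), regression model: for a convex `f` on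
`[-1/2, 1/2]`, with `f_s x = (f x + f (-x))/2 - f 0`, the biases
`D j = 2^{-(j-1)} ∑_{k=1}^{2^{j-1}} f_s (k/(2n))` satisfy
`0 ≤ D j ≤ ((2^{j-1}+1)/(2^j+1)) * D (j+1)` for every `j ≥ 1` with `2^j ≤ n`. -/
theorem regression_bias_nonneg_and_growth
    (n : ℕ) (hn : 1 ≤ n)
    (f : ℝ → ℝ) (hf : ConvexOn ℝ (Set.Icc (-(1:ℝ)/2) (1/2)) f)
    (fs : ℝ → ℝ) (hfs : ∀ x : ℝ, fs x = (f x + f (-x))/2 - f 0)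
    (D : ℕ → ℝ)
    (hD : ∀ j : ℕ, 1 ≤ j → 2 ^ (j - 1) ≤ n →
      D j = (2:ℝ) ^ (1 - (j:ℤ)) * ∑ k ∈ Finset.Icc (1:ℕ) (2 ^ (j - 1)), fs ((k:ℝ)/(2*(n:ℝ)))) :
    ∀ j : ℕ, 1 ≤ j → 2 ^ j ≤ n →
      0 ≤ D j ∧ D j ≤ (((2:ℝ) ^ (j - 1) + 1)/((2:ℝ) ^ j + 1)) * D (j + 1) := by
  intro j hj hjn
  have hn0 : (0:ℝ) < n := by exact_mod_cast hn
  set M : ℕ := 2 ^ (j - 1) with hM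
  have hMpos : 0 < M := Nat.pow_pos (by norm_num)
  have h2M : 2 ^ j = 2 * M := by
    rw [hM, ← pow_succ']
    congr 1
    omega
  have hMn2 : 2 * M ≤ n := h2M ▸ hjn
  have hMn : M ≤ n := by omega
  -- basic facts about fs
  have hmem : ∀ x : ℝ, 0 ≤ x → x ≤ 1/2 → x ∈ Set.Icc (-(1:ℝ)/2) (1/2) :=
    fun x h1 h2 => ⟨by linarith, h2⟩
  have hmemneg : ∀ x : ℝ, 0 ≤ x → x ≤ 1/2 → -x ∈ Set.Icc (-(1:ℝ)/2) (1/2) :=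
    fun x h1 h2 => ⟨by linarith, by linarith⟩
  have hfsnonneg : ∀ x : ℝ, 0 ≤ x → x ≤ 1/2 → 0 ≤ fs x := by
    intro x h1 h2
    have := hf.2 (hmem x h1 h2) (hmemneg x h1 h2)
      (by norm_num : (0:ℝ) ≤ 1/2) (by norm_num : (0:ℝ) ≤ 1/2) (by norm_num)
    simp only [smul_eq_mul] at this
    have h0 : (1/2 : ℝ) * x + (1/2 : ℝ) * (-x) = 0 := by ring
    rw [h0] at this
    rw [hfs]
    linarith
  have hslope : ∀ u v : ℝ, 0 < u → u ≤ v → v ≤ 1/2 → v * fs u ≤ u * fs v := by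
    intro u v hu huv hv
    have hv0 : 0 < v := lt_of_lt_of_le hu huv
    set b : ℝ := u / v with hb
    have hb0 : 0 ≤ b := by positivity
    have hb1 : b ≤ 1 := by rw [hb, div_le_one hv0]; exact huv
    have hbv : b * v = u := div_mul_cancel₀ u (ne_of_gt hv0)
    have h0mem : (0:ℝ) ∈ Set.Icc (-(1:ℝ)/2) (1/2) := ⟨by norm_num, by norm_num⟩
    have h1 := hf.2 h0mem (hmem v (le_of_lt hv0) hv)
      (show (0:ℝ) ≤ 1 - b by linarith) hb0 (show (1 - b) + b = 1 by ring)
    have h2 := hf.2 h0mem (hmemneg v (le_of_lt hv0) hv)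
      (show (0:ℝ) ≤ 1 - b by linarith) hb0 (show (1 - b) + b = 1 by ring)
    simp only [smul_eq_mul, mul_zero, zero_add, mul_neg] at h1 h2
    rw [hbv] at h1 h2
    have hkey : fs u ≤ b * fs v := by
      rw [hfs, hfs]
      linarith
    have := mul_le_mul_of_nonneg_left hkey (le_of_lt hv0)
    calc v * fs u ≤ v * (b * fs v) := this
      _ = u * fs v := by rw [← hbv]; ring
  -- the discretized function
  set g : ℕ → ℝ := fun k => fs ((k:ℝ)/(2*(n:ℝ))) with hg
  have hgnonneg : ∀ k : ℕ, k ≤ n → 0 ≤ g k := by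
    intro k hk
    apply hfsnonneg
    · positivity
    · rw [div_le_iff₀ (by positivity)]
      have : (k:ℝ) ≤ n := by exact_mod_cast hk
      linarith
  have hgmono : ∀ k l : ℕ, 1 ≤ k → k ≤ l → l ≤ n → (l:ℝ) * g k ≤ (k:ℝ) * g l := by
    intro k l h1 h2 h3
    have hk0 : (0:ℝ) < k := by exact_mod_cast h1
    have hkl : (k:ℝ) ≤ l := by exact_mod_cast h2
    have hln : (l:ℝ) ≤ n := by exact_mod_cast h3
    have h2n : (0:ℝ) < 2*n := by positivity
    have hs := hslope ((k:ℝ)/(2*n)) ((l:ℝ)/(2*n))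
      (by positivity)
      (by gcongr)
      (by rw [div_le_iff₀ h2n]; linarith)
    have := mul_le_mul_of_nonneg_left hs (le_of_lt h2n)
    calc (l:ℝ) * g k = (2*n) * ((l:ℝ)/(2*n) * g k) := by field_simp
      _ ≤ (2*n) * ((k:ℝ)/(2*n) * g l) := this
      _ = (k:ℝ) * g l := by field_simp
  -- sums
  set S1 : ℝ := ∑ k ∈ Finset.Icc (1:ℕ) M, g k with hS1
  set S2 : ℝ := ∑ k ∈ Finset.Icc (1:ℕ) (2*M), g k with hS2
  have hS1nonneg : 0 ≤ S1 :=
    Finset.sum_nonneg fun k hk => hgnonneg k (le_trans (Finset.mem_Icc.mp hk).2 hMn)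
  -- split S2
  have hsplit : S1 + (∑ k ∈ Finset.Ioc M (2*M), g k) = S2 := by
    rw [hS1, hS2, Icc_one_eq_Ioc_zero, Icc_one_eq_Ioc_zero]
    exact Finset.sum_Ioc_consecutive g (Nat.zero_le M) (by omega)
  set Mr : ℝ := (M:ℝ) with hMr
  have hMr0 : (0:ℝ) < Mr := by rw [hMr]; exact_mod_cast hMpos
  -- step A : Mr * S1 ≤ A * g M with A = Mr(Mr+1)/2
  have stepA : Mr * S1 ≤ (Mr * (Mr + 1) / 2) * g M := by
    have h1 : Mr * S1 = ∑ k ∈ Finset.Icc (1:ℕ) M, Mr * g k := by rw [Finset.mul_sum]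
    have h2 : ∑ k ∈ Finset.Icc (1:ℕ) M, Mr * g k ≤ ∑ k ∈ Finset.Icc (1:ℕ) M, (k:ℝ) * g M := by
      apply Finset.sum_le_sum
      intro k hk
      obtain ⟨hk1, hk2⟩ := Finset.mem_Icc.mp hk
      exact hgmono k M hk1 hk2 hMn
    have h3 : ∑ k ∈ Finset.Icc (1:ℕ) M, (k:ℝ) * g M = (Mr * (Mr + 1) / 2) * g M := by
      rw [← Finset.sum_mul, gauss_real]
    linarith
  -- step B : B * g M ≤ Mr * (S2 - S1) with B = Mr(3Mr+1)/2
  have stepB : (Mr * (3*Mr + 1) / 2) * g M ≤ Mr * (S2 - S1) := by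
    have hB : ∑ k ∈ Finset.Ioc M (2*M), (k:ℝ) = Mr * (3*Mr + 1) / 2 := by
      have hcons := Finset.sum_Ioc_consecutive (fun k : ℕ => (k:ℝ))
        (Nat.zero_le M) (by omega : M ≤ 2*M)
      rw [← Icc_one_eq_Ioc_zero, ← Icc_one_eq_Ioc_zero, gauss_real, gauss_real] at hcons
      rw [hMr]
      push_cast at hcons ⊢
      linarith
    have h1 : ∑ k ∈ Finset.Ioc M (2*M), (k:ℝ) * g M ≤ ∑ k ∈ Finset.Ioc M (2*M), Mr * g k := by
      apply Finset.sum_le_sum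
      intro k hk
      obtain ⟨hk1, hk2⟩ := Finset.mem_Ioc.mp hk
      exact hgmono M k hMpos (le_of_lt hk1) (le_trans hk2 hMn2)
    have h2 : ∑ k ∈ Finset.Ioc M (2*M), (k:ℝ) * g M = (Mr * (3*Mr + 1) / 2) * g M := by
      rw [← Finset.sum_mul, hB]
    have h3 : ∑ k ∈ Finset.Ioc M (2*M), Mr * g k = Mr * (S2 - S1) := by
      rw [← Finset.mul_sum]
      congr 1
      linarith [hsplit]
    linarith
  -- key inequality
  have key : (2*Mr + 1) * 2 * S1 ≤ (Mr + 1) * S2 := by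
    nlinarith [mul_le_mul_of_nonneg_left stepA (by positivity : (0:ℝ) ≤ 3*Mr + 1),
      mul_le_mul_of_nonneg_left stepB (by positivity : (0:ℝ) ≤ Mr + 1), hMr0, hS1nonneg]
  -- powers
  have hpow1 : (2:ℝ) ^ (j - 1) = Mr := by rw [hMr, hM]; push_cast; ring
  have hpow2 : (2:ℝ) ^ j = 2 * Mr := by
    have h : (2:ℝ) ^ j = ((2^j : ℕ) : ℝ) := by push_cast; ring
    rw [h, h2M, hMr, hM]
    push_cast
    ring
  -- rewrite D j and D (j+1)
  have hDj : D j = Mr⁻¹ * S1 := by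
    rw [hD j hj hMn]
    congr 1
    have hj1 : (1 : ℤ) - (j:ℤ) = -((j - 1 : ℕ) : ℤ) := by push_cast; omega
    rw [hj1, zpow_neg, zpow_natCast, hMr, hM]
    push_cast
    ring
  have hDj1 : D (j + 1) = (2*Mr)⁻¹ * S2 := by
    rw [hD (j+1) (by omega) (by rw [Nat.add_sub_cancel]; exact hjn)]
    rw [Nat.add_sub_cancel, h2M]
    congr 1
    rw [show (1 : ℤ) - ((j+1:ℕ):ℤ) = -((j:ℕ):ℤ) by push_cast; ring, zpow_neg, zpow_natCast,
      hpow2]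
  constructor
  · rw [hDj]
    positivity
  · rw [hDj, hDj1, hpow1, hpow2]
    have hR : ((Mr+1)/(2*Mr+1)) * ((2*Mr)⁻¹ * S2) = ((Mr+1)*S2)/((2*Mr+1)*(2*Mr)) := by
      field_simp
    rw [hR, inv_mul_eq_div, div_le_div_iff₀ hMr0 (by positivity)]
    nlinarith [mul_le_mul_of_nonneg_left key (le_of_lt hMr0)]
end

section
/- Let k > 0, let f_k(t) = k t on [-1/2,1/2], and let ε > 0 satisfy ε² ≤ k²/24. Then ω(ε, f_k, F_m) = (3k)^{1/3} ε^{2/3}. -/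
open MeasureTheory Set

/-- FTC computation of `∫ (d - k t)²`. -/
lemma integral_sq_lin (d k a b : ℝ) (hk : k ≠ 0) :
    ∫ t in a..b, (d - k*t)^2 = ((d - k*a)^3 - (d - k*b)^3)/(3*k) := by
  have hder : ∀ t ∈ Set.uIcc a b,
      HasDerivAt (fun t => -(d - k*t)^3/(3*k)) ((d - k*t)^2) t := by
    intro t _
    have h1 : HasDerivAt (fun t : ℝ => d - k*t) (-k) t := by
      simpa using ((hasDerivAt_id t).const_mul k).const_sub d
    have h2 := (h1.pow 3).neg.div_const (3*k)
    refine h2.congr_deriv ?_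
    rw [div_eq_iff (mul_ne_zero three_ne_zero hk)]
    push_cast
    ring
  have hcont : IntervalIntegrable (fun t => (d - k*t)^2) volume a b := by
    apply Continuous.intervalIntegrable
    continuity
  rw [intervalIntegral.integral_eq_sub_of_hasDerivAt hder hcont]
  ring

/-- Interval integrability of `(g t - k t)²` for globally monotone `g`. -/
lemma monotone_sq_intervalIntegrable (g : ℝ → ℝ) (hg : Monotone g) (k a b : ℝ) :
    IntervalIntegrable (fun t => (g t - k*t)^2) volume a b := by
  have hmeas : Measurable fun t : ℝ => (g t - k*t)^2 :=
    (hg.measurable.sub (measurable_id.const_mul k)).pow_const 2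
  rw [intervalIntegrable_iff]
  set C : ℝ := |g (min a b)| + |g (max a b)| + |k| * (|a| + |b|) with hC
  apply Measure.integrableOn_of_bounded (M := C^2) (by simp [measure_lt_top])
    hmeas.aestronglyMeasurable
  rw [ae_restrict_iff' measurableSet_uIoc]
  filter_upwards with x hx
  have hx1 : min a b < x := hx.1
  have hx2 : x ≤ max a b := hx.2
  have hg1 : g (min a b) ≤ g x := hg hx1.le
  have hg2 : g x ≤ g (max a b) := hg hx2
  have habs : |g x - k*x| ≤ C := by
    have h1 : |g x| ≤ |g (min a b)| + |g (max a b)| := by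
      rw [abs_le]
      constructor
      · linarith [neg_abs_le (g (min a b)), abs_nonneg (g (max a b))]
      · linarith [le_abs_self (g (max a b)), abs_nonneg (g (min a b))]
    have h2 : |x| ≤ |a| + |b| := by
      rw [abs_le]
      constructor
      · have : -(|a| + |b|) ≤ min a b := by
          rcases min_cases a b with ⟨h, _⟩ | ⟨h, _⟩ <;> rw [h] <;>
            [linarith [neg_abs_le a, abs_nonneg b]; linarith [neg_abs_le b, abs_nonneg a]]
        linarith
      · have : max a b ≤ |a| + |b| := by
          rcases max_cases a b with ⟨h, _⟩ | ⟨h, _⟩ <;> rw [h] <;>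
            [linarith [le_abs_self a, abs_nonneg b]; linarith [le_abs_self b, abs_nonneg a]]
        linarith
    calc |g x - k*x| ≤ |g x| + |k*x| := by
          simpa [sub_eq_add_neg, abs_neg] using abs_add_le (g x) (-(k*x))
      _ ≤ (|g (min a b)| + |g (max a b)|) + |k| * (|a| + |b|) := by
          rw [abs_mul]
          gcongr
      _ = C := by rw [hC]
  have := abs_le.mp habs
  rw [Real.norm_eq_abs, abs_of_nonneg (sq_nonneg _)]
  nlinarith [this.1, this.2]

set_option maxHeartbeats 1000000 in
/-- Key upper bound: any monotone `g` within `ε` of `kt` in `L²` has `g 0 ≤ d`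
where `d³ = 3kε²`. -/
lemma key_upper (k ε d : ℝ) (hk : 0 < k) (hε : 0 < ε) (hε2 : ε^2 ≤ k^2/24)
    (hd3 : d^3 = 3*k*ε^2) (hd : 0 < d)
    (g : ℝ → ℝ) (hg : Monotone g)
    (hint : (∫ t in (-(1:ℝ)/2)..(1/2), (g t - k * t)^2) ≤ ε^2) :
    g 0 ≤ d := by
  by_contra hcon
  push_neg at hcon
  set d0 := g 0 with hd0
  set m : ℝ := min (d0/k) (1/2) with hm
  have hd0pos : 0 < d0 := lt_trans hd hcon
  have hm0 : 0 < m := lt_min (div_pos hd0pos hk) (by norm_num)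
  have hm2 : m ≤ 1/2 := min_le_right _ _
  have hkm : k*m ≤ d0 := by
    have h1 : m ≤ d0/k := min_le_left _ _
    calc k*m ≤ k*(d0/k) := by gcongr
      _ = d0 := by field_simp
  have hii : ∀ a b : ℝ, IntervalIntegrable (fun t => (g t - k*t)^2) volume a b :=
    fun a b => monotone_sq_intervalIntegrable g hg k a b
  have h1 : (∫ t in (0:ℝ)..m, (g t - k*t)^2) + (∫ t in m..(1/2:ℝ), (g t - k*t)^2)
      = ∫ t in (0:ℝ)..(1/2:ℝ), (g t - k*t)^2 :=
    intervalIntegral.integral_add_adjacent_intervals (hii _ _) (hii _ _)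
  have h2 : (∫ t in (-(1:ℝ)/2)..(0:ℝ), (g t - k*t)^2) + (∫ t in (0:ℝ)..(1/2:ℝ), (g t - k*t)^2)
      = ∫ t in (-(1:ℝ)/2)..(1/2:ℝ), (g t - k*t)^2 :=
    intervalIntegral.integral_add_adjacent_intervals (hii _ _) (hii _ _)
  have hnn1 : 0 ≤ ∫ t in (-(1:ℝ)/2)..(0:ℝ), (g t - k*t)^2 :=
    intervalIntegral.integral_nonneg (by norm_num) (fun u _ => sq_nonneg _)
  have hnn2 : 0 ≤ ∫ t in m..(1/2:ℝ), (g t - k*t)^2 :=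
    intervalIntegral.integral_nonneg hm2 (fun u _ => sq_nonneg _)
  have hle : (∫ t in (0:ℝ)..m, (g t - k*t)^2) ≤ ε^2 := by linarith
  have hmono : (∫ t in (0:ℝ)..m, (d0 - k*t)^2) ≤ ∫ t in (0:ℝ)..m, (g t - k*t)^2 := by
    apply intervalIntegral.integral_mono_on hm0.le
      (by apply Continuous.intervalIntegrable; continuity) (hii _ _)
    intro x hx
    have hgx : d0 ≤ g x := hg hx.1
    have hkx : k*x ≤ k*m := by gcongr; exact hx.2
    have hpos : 0 ≤ d0 - k*x := by linarith
    have : d0 - k*x ≤ g x - k*x := by linarith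
    exact pow_le_pow_left₀ hpos this 2
  rw [integral_sq_lin d0 k 0 m hk.ne'] at hmono
  have h3k : (0:ℝ) < 3*k := by linarith
  have hfin : d0^3 - (d0 - k*m)^3 ≤ 3*k*ε^2 := by
    have := le_trans hmono hle
    rw [div_le_iff₀ h3k] at this
    nlinarith [this]
  clear hii h1 h2 hnn1 hnn2 hle hmono hint hg
  rcases le_or_gt (d0/k) (1/2) with hc | hc
  · have hmeq : k*m = d0 := by
      rw [hm, min_eq_left hc]; field_simp
    rw [hmeq] at hfin
    nlinarith [hfin, mul_pos (sub_pos.2 hcon) hd, sq_nonneg (d0 + d), sq_nonneg (d0 - d)]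
  · have hmeq : m = 1/2 := min_eq_right hc.le
    have hck : k/2 < d0 := by
      have := (lt_div_iff₀ hk).mp hc
      linarith
    rw [hmeq] at hfin
    have hbound : 3*k*ε^2 ≤ k^3/8 := by
      have h' := mul_le_mul_of_nonneg_left hε2 h3k.le
      have h'' : 3*k*(k^2/24) = k^3/8 := by ring
      linarith [h', h'']
    nlinarith [hfin, hbound, mul_pos (mul_pos hk hd0pos) (show (0:ℝ) < 2*d0 - k by linarith)]

/-- The extremal monotone function achieving the modulus. -/
lemma key_achieve (k ε d : ℝ) (hk : 0 < k) (hε : 0 < ε)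
    (hd3 : d^3 = 3*k*ε^2) (hd : 0 < d) (hdk : d ≤ k/2) :
    ∃ g : ℝ → ℝ, Monotone g ∧
      (∫ t in (-(1:ℝ)/2)..(1/2), (g t - k*t)^2) = ε^2 ∧ g 0 = d := by
  set G : ℝ → ℝ := fun t => if t < 0 then k*t else max (k*t) d with hG
  have hmono : Monotone G := by
    intro s t hst
    by_cases hs : s < 0
    · by_cases ht : t < 0
      · simp only [hG, if_pos hs, if_pos ht]
        nlinarith
      · simp only [hG, if_pos hs, if_neg ht]
        have : k*s ≤ k*t := by nlinarith
        exact le_trans this (le_max_left _ _)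
    · have ht : ¬ t < 0 := fun h => hs (lt_of_le_of_lt hst h)
      simp only [hG, if_neg hs, if_neg ht]
      exact max_le_max (by nlinarith) le_rfl
  refine ⟨G, hmono, ?_, ?_⟩
  swap
  · simp only [hG]
    rw [if_neg (lt_irrefl 0)]
    simp [max_eq_right hd.le]
  set c : ℝ := d/k with hc
  have hc0 : 0 < c := div_pos hd hk
  have hkc : k*c = d := by rw [hc]; field_simp
  have hc2 : c ≤ 1/2 := by
    rw [hc, div_le_iff₀ hk]
    linarith
  have hii : ∀ a b : ℝ, IntervalIntegrable (fun t => (G t - k*t)^2) volume a b :=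
    fun a b => monotone_sq_intervalIntegrable G hmono k a b
  have I1 : (∫ t in (-(1:ℝ)/2)..(0:ℝ), (G t - k*t)^2) = 0 := by
    have h0 : ∀ᵐ x : ℝ ∂volume, x ≠ 0 := by
      rw [ae_iff]
      have : {x : ℝ | ¬ x ≠ 0} = {0} := by ext x; simp
      rw [this]
      exact measure_singleton 0
    have hcongr : (∫ t in (-(1:ℝ)/2)..(0:ℝ), (G t - k*t)^2)
        = ∫ t in (-(1:ℝ)/2)..(0:ℝ), (0:ℝ) := by
      apply intervalIntegral.integral_congr_ae
      filter_upwards [h0] with x hx hmem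
      have hxI : x ∈ Set.Ioc (-(1:ℝ)/2) (0:ℝ) := by
        rwa [Set.uIoc_of_le (by norm_num : -(1:ℝ)/2 ≤ 0)] at hmem
      have hxneg : x < 0 := lt_of_le_of_ne hxI.2 hx
      simp only [hG, if_pos hxneg]
      ring
    rw [hcongr]
    simp
  have I2 : (∫ t in (0:ℝ)..c, (G t - k*t)^2) = ε^2 := by
    have heq : Set.EqOn (fun t => (G t - k*t)^2) (fun t => (d - k*t)^2)
        (Set.uIcc (0:ℝ) c) := by
      intro x hx
      rw [Set.uIcc_of_le hc0.le] at hx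
      have hx0 : ¬ x < 0 := not_lt.2 hx.1
      have hxd : k*x ≤ d := by
        calc k*x ≤ k*c := by nlinarith [hx.2]
          _ = d := hkc
      simp only [hG, if_neg hx0, max_eq_right hxd]
    rw [intervalIntegral.integral_congr heq, integral_sq_lin d k 0 c hk.ne', hkc]
    have hnum : (d - k*0)^3 - (d-d)^3 = 3*k*ε^2 := by rw [← hd3]; ring
    rw [hnum]
    field_simp
  have I3 : (∫ t in c..(1/2:ℝ), (G t - k*t)^2) = 0 := by
    have heq : Set.EqOn (fun t => (G t - k*t)^2) (fun _ => (0:ℝ))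
        (Set.uIcc c (1/2:ℝ)) := by
      intro x hx
      rw [Set.uIcc_of_le hc2] at hx
      have hx0 : ¬ x < 0 := not_lt.2 (le_trans hc0.le hx.1)
      have hxd : d ≤ k*x := by
        calc d = k*c := hkc.symm
          _ ≤ k*x := by nlinarith [hx.1]
      simp only [hG, if_neg hx0, max_eq_left hxd]
      ring
    rw [intervalIntegral.integral_congr heq]
    simp
  have h1 : (∫ t in (0:ℝ)..c, (G t - k*t)^2) + (∫ t in c..(1/2:ℝ), (G t - k*t)^2)
      = ∫ t in (0:ℝ)..(1/2:ℝ), (G t - k*t)^2 :=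
    intervalIntegral.integral_add_adjacent_intervals (hii _ _) (hii _ _)
  have h2 : (∫ t in (-(1:ℝ)/2)..(0:ℝ), (G t - k*t)^2)
      + (∫ t in (0:ℝ)..(1/2:ℝ), (G t - k*t)^2)
      = ∫ t in (-(1:ℝ)/2)..(1/2:ℝ), (G t - k*t)^2 :=
    intervalIntegral.integral_add_adjacent_intervals (hii _ _) (hii _ _)
  rw [← h2, ← h1, I1, I2, I3]
  ring

/-- The local modulus of continuity of `f` at `0` over the class of nondecreasing
functions on `[-1/2, 1/2]`. -/
noncomputable def omegaMonotone (ε : ℝ) (f : ℝ → ℝ) : ℝ :=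
  sSup {d : ℝ | ∃ g : ℝ → ℝ, MonotoneOn g (Set.Icc (-(1:ℝ)/2) (1/2)) ∧
    (∫ t in (-(1:ℝ)/2)..(1/2), (g t - f t)^2) ≤ ε^2 ∧ d = |g 0 - f 0|}

/-- Example 1 of Cai, Low and Xia (2013), monotone class: for `f_k t = k t` with `k > 0` and
`ε² ≤ k²/24`, the local modulus over the monotone class equals `(3k)^{1/3} ε^{2/3}`. -/
theorem modulus_linear_monotone
    (k ε : ℝ) (hk : 0 < k) (hε : 0 < ε) (hε2 : ε^2 ≤ k^2/24) :
    omegaMonotone ε (fun t => k * t) = (3*k) ^ ((1:ℝ)/3) * ε ^ ((2:ℝ)/3) := by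
  set d : ℝ := (3*k) ^ ((1:ℝ)/3) * ε ^ ((2:ℝ)/3) with hdd
  have h3k : (0:ℝ) < 3*k := by linarith
  have hd : 0 < d := mul_pos (Real.rpow_pos_of_pos h3k _) (Real.rpow_pos_of_pos hε _)
  have e1 : ((3*k) ^ ((1:ℝ)/3))^(3:ℕ) = 3*k := by
    rw [← Real.rpow_natCast ((3*k) ^ ((1:ℝ)/3)) 3, ← Real.rpow_mul h3k.le]
    norm_num
  have e2 : (ε ^ ((2:ℝ)/3))^(3:ℕ) = ε^2 := by
    rw [← Real.rpow_natCast (ε ^ ((2:ℝ)/3)) 3, ← Real.rpow_mul hε.le]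
    norm_num [Real.rpow_two]
  have hd3 : d^3 = 3*k*ε^2 := by rw [hdd, mul_pow, e1, e2]
  have hdk : d ≤ k/2 := by
    by_contra hcon
    push_neg at hcon
    have hlt : (k/2)^3 < d^3 := by
      apply pow_lt_pow_left₀ hcon (by positivity)
      norm_num
    have h' := mul_le_mul_of_nonneg_left hε2 h3k.le
    have h'' : 3*k*(k^2/24) = (k/2)^3 := by ring
    nlinarith [hlt, h', h'']
  obtain ⟨g0, hg0mono, hg0int, hg0val⟩ := key_achieve k ε d hk hε hd3 hd hdk
  show sSup {x : ℝ | ∃ g : ℝ → ℝ, MonotoneOn g (Set.Icc (-(1:ℝ)/2) (1/2)) ∧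
    (∫ t in (-(1:ℝ)/2)..(1/2), (g t - k * t)^2) ≤ ε^2 ∧ x = |g 0 - k * 0|} = d
  set S : Set ℝ := {x : ℝ | ∃ g : ℝ → ℝ, MonotoneOn g (Set.Icc (-(1:ℝ)/2) (1/2)) ∧
    (∫ t in (-(1:ℝ)/2)..(1/2), (g t - k * t)^2) ≤ ε^2 ∧ x = |g 0 - k * 0|} with hS
  have hSd : d ∈ S := by
    refine ⟨g0, hg0mono.monotoneOn _, le_of_eq hg0int, ?_⟩
    rw [hg0val]
    rw [mul_zero, sub_zero, abs_of_pos hd]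
  have hub : ∀ x ∈ S, x ≤ d := by
    rintro x ⟨g, hgmono, hgint, rfl⟩
    set G : ℝ → ℝ := fun t => g (max (-(1:ℝ)/2) (min t (1/2))) with hGdef
    have hmem : ∀ t : ℝ, max (-(1:ℝ)/2) (min t (1/2)) ∈ Set.Icc (-(1:ℝ)/2) (1/2:ℝ) :=
      fun t => ⟨le_max_left _ _, max_le (by norm_num) (min_le_right _ _)⟩
    have hGmono : Monotone G := fun s t hst =>
      hgmono (hmem s) (hmem t) (max_le_max le_rfl (min_le_min hst le_rfl))
    have hGeq : ∀ t ∈ Set.Icc (-(1:ℝ)/2) (1/2:ℝ), G t = g t := by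
      intro t ht
      simp only [hGdef]
      rw [min_eq_left ht.2, max_eq_right ht.1]
    have hG0 : G 0 = g 0 := hGeq 0 (by norm_num)
    have hGint : (∫ t in (-(1:ℝ)/2)..(1/2:ℝ), (G t - k*t)^2) ≤ ε^2 := by
      have hcongr : (∫ t in (-(1:ℝ)/2)..(1/2:ℝ), (G t - k*t)^2)
          = ∫ t in (-(1:ℝ)/2)..(1/2:ℝ), (g t - k*t)^2 := by
        apply intervalIntegral.integral_congr
        intro t ht
        rw [Set.uIcc_of_le (by norm_num : -(1:ℝ)/2 ≤ 1/2)] at ht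
        simp only
        rw [hGeq t ht]
      rw [hcongr]
      exact hgint
    have hup : G 0 ≤ d := key_upper k ε d hk hε hε2 hd3 hd G hGmono hGint
    set G' : ℝ → ℝ := fun t => -(G (-t)) with hG'def
    have hG'mono : Monotone G' := by
      intro s t hst
      simp only [hG'def]
      exact neg_le_neg (hGmono (neg_le_neg hst))
    have hG'int : (∫ t in (-(1:ℝ)/2)..(1/2:ℝ), (G' t - k*t)^2) ≤ ε^2 := by
      calc (∫ t in (-(1:ℝ)/2)..(1/2:ℝ), (G' t - k*t)^2)
          = ∫ t in (-(1:ℝ)/2)..(1/2:ℝ), (fun x => (G x - k*x)^2) (-t) := by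
            apply intervalIntegral.integral_congr
            intro t _
            simp only [hG'def]
            ring
        _ = ∫ t in (-(1/2:ℝ))..(-(-(1:ℝ)/2)), (fun x => (G x - k*x)^2) t :=
            intervalIntegral.integral_comp_neg (fun x => (G x - k*x)^2)
        _ = ∫ t in (-(1:ℝ)/2)..(1/2:ℝ), (G t - k*t)^2 := by
            rw [show (-(1/2:ℝ)) = (-(1:ℝ)/2) by norm_num,
              show (-(-(1:ℝ)/2)) = (1/2:ℝ) by norm_num]
        _ ≤ ε^2 := hGint
    have hdown : -(G 0) ≤ d := by
      have h := key_upper k ε d hk hε hε2 hd3 hd G' hG'mono hG'int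
      simpa [hG'def] using h
    rw [mul_zero, sub_zero, ← hG0]
    exact abs_le.2 ⟨by linarith, hup⟩
  exact le_antisymm (csSup_le ⟨d, hSd⟩ hub) (le_csSup ⟨d, hub⟩ hSd)
end

section
/- Let f_0 be the zero function on [-1/2,1/2]. Then for every ε > 0, ω(ε, f_0, F_m) = √2 · ε. -/
open MeasureTheory

/-- Example 1 of Cai, Low and Xia (2013), case `k = 0`: for the zero function, the local
modulus over the monotone class equals `√2 · ε` for every `ε > 0`. -/
theorem modulus_zero_monotone (ε : ℝ) (hε : 0 < ε) :
    omegaMonotone ε (fun _ => (0:ℝ)) = Real.sqrt 2 * ε := by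
  have h2 : (0:ℝ) < Real.sqrt 2 := by positivity
  have hs2 : (Real.sqrt 2)^2 = 2 := Real.sq_sqrt (by norm_num)
  set S : Set ℝ := {d : ℝ | ∃ g : ℝ → ℝ, MonotoneOn g (Set.Icc (-(1:ℝ)/2) (1/2)) ∧
    (∫ t in (-(1:ℝ)/2)..(1/2), (g t - (fun _ => (0:ℝ)) t)^2) ≤ ε^2 ∧
    d = |g 0 - (fun _ => (0:ℝ)) 0|} with hS
  have key : ∀ d ∈ S, d ≤ Real.sqrt 2 * ε := by
    rintro d ⟨g, hg, hint, rfl⟩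
    simp only [sub_zero] at hint ⊢
    -- interval integrability of g on [-1/2, 1/2]
    have huIcc : Set.uIcc (-(1:ℝ)/2) (1/2) = Set.Icc (-(1:ℝ)/2) (1/2) :=
      Set.uIcc_of_le (by norm_num)
    have hgi : IntervalIntegrable g volume (-(1:ℝ)/2) (1/2) := by
      apply MonotoneOn.intervalIntegrable
      rwa [huIcc]
    -- g is bounded on the interval
    set C : ℝ := max ‖g (-(1:ℝ)/2)‖ ‖g (1/2)‖ with hC
    have hbound : ∀ x ∈ Set.Icc (-(1:ℝ)/2) (1/2), ‖g x‖ ≤ C := by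
      intro x hx
      rw [Real.norm_eq_abs, abs_le]
      constructor
      · have h1 : g (-(1:ℝ)/2) ≤ g x := hg (by constructor <;> norm_num) hx hx.1
        have : -C ≤ -‖g (-(1:ℝ)/2)‖ := neg_le_neg (le_max_left _ _)
        have h3 : -‖g (-(1:ℝ)/2)‖ ≤ g (-(1:ℝ)/2) := neg_abs_le _
        linarith
      · have h1 : g x ≤ g (1/2) := hg hx (by constructor <;> norm_num) hx.2
        have h3 : g (1/2) ≤ ‖g (1/2)‖ := le_abs_self _
        have : ‖g (1/2)‖ ≤ C := le_max_right _ _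
        linarith
    -- g² is interval integrable
    have hsq : IntervalIntegrable (fun t => (g t)^2) volume (-(1:ℝ)/2) (1/2) := by
      constructor
      · have hmul : IntegrableOn (fun t => g t * g t) (Set.Ioc (-(1:ℝ)/2) (1/2)) volume := by
          apply Integrable.bdd_mul (c := C) hgi.1 hgi.1.aestronglyMeasurable
          · rw [ae_restrict_iff' measurableSet_Ioc]
            exact Filter.Eventually.of_forall fun x hx => hbound x (Set.Ioc_subset_Icc_self hx)
        simpa [sq] using hmul
      · rw [Set.Ioc_eq_empty (by norm_num)]
        exact integrableOn_empty
    have hsqA : IntervalIntegrable (fun t => (g t)^2) volume (-(1:ℝ)/2) 0 :=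
      hsq.mono_set (by rw [huIcc, Set.uIcc_of_le (by norm_num : -(1:ℝ)/2 ≤ 0)]
                       exact Set.Icc_subset_Icc le_rfl (by norm_num))
    have hsqB : IntervalIntegrable (fun t => (g t)^2) volume 0 (1/2) :=
      hsq.mono_set (by rw [huIcc, Set.uIcc_of_le (by norm_num : (0:ℝ) ≤ 1/2)]
                       exact Set.Icc_subset_Icc (by norm_num) le_rfl)
    have hsplit : (∫ t in (-(1:ℝ)/2)..0, (g t)^2) + (∫ t in (0:ℝ)..(1/2), (g t)^2)
        = ∫ t in (-(1:ℝ)/2)..(1/2), (g t)^2 :=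
      intervalIntegral.integral_add_adjacent_intervals hsqA hsqB
    have h0mem : (0:ℝ) ∈ Set.Icc (-(1:ℝ)/2) (1/2) := by constructor <;> norm_num
    have hkey : (g 0)^2 * (1/2) ≤ ε^2 := by
      rcases le_or_gt 0 (g 0) with hg0 | hg0
      · -- g ≥ g 0 ≥ 0 on [0, 1/2]
        have hA : 0 ≤ ∫ t in (-(1:ℝ)/2)..0, (g t)^2 :=
          intervalIntegral.integral_nonneg (by norm_num) (fun u _ => sq_nonneg _)
        have hB : (∫ t in (0:ℝ)..(1/2), (g 0)^2) ≤ ∫ t in (0:ℝ)..(1/2), (g t)^2 := by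
          apply intervalIntegral.integral_mono_on (by norm_num) intervalIntegrable_const hsqB
          intro x hx
          have hxm : x ∈ Set.Icc (-(1:ℝ)/2) (1/2) :=
            ⟨by linarith [hx.1], hx.2⟩
          have := hg h0mem hxm hx.1
          nlinarith
        rw [intervalIntegral.integral_const] at hB
        simp only [smul_eq_mul] at hB
        nlinarith
      · -- g ≤ g 0 < 0 on [-1/2, 0]
        have hA : 0 ≤ ∫ t in (0:ℝ)..(1/2), (g t)^2 :=
          intervalIntegral.integral_nonneg (by norm_num) (fun u _ => sq_nonneg _)
        have hB : (∫ t in (-(1:ℝ)/2)..0, (g 0)^2) ≤ ∫ t in (-(1:ℝ)/2)..0, (g t)^2 := by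
          apply intervalIntegral.integral_mono_on (by norm_num) intervalIntegrable_const hsqA
          intro x hx
          have hxm : x ∈ Set.Icc (-(1:ℝ)/2) (1/2) :=
            ⟨hx.1, by linarith [hx.2]⟩
          have := hg hxm h0mem hx.2
          nlinarith
        rw [intervalIntegral.integral_const] at hB
        simp only [smul_eq_mul] at hB
        nlinarith
    nlinarith [abs_nonneg (g 0), sq_abs (g 0), mul_pos h2 hε]
  have hmem : Real.sqrt 2 * ε ∈ S := by
    refine ⟨fun t => if 0 ≤ t then Real.sqrt 2 * ε else 0, ?_, ?_, ?_⟩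
    · apply Monotone.monotoneOn
      intro s t hst
      by_cases hs : 0 ≤ s
      · simp [hs, le_trans hs hst]
      · by_cases ht : 0 ≤ t <;> simp [hs, ht] <;> positivity
    · have heq : (fun t => ((if (0:ℝ) ≤ t then Real.sqrt 2 * ε else 0) - (fun _ => (0:ℝ)) t)^2)
          = Set.indicator (Set.Ici (0:ℝ)) (fun _ => (Real.sqrt 2 * ε)^2) := by
        funext t
        by_cases ht : (0:ℝ) ≤ t <;>
          simp [Set.indicator, Set.mem_Ici, ht]
      rw [heq, intervalIntegral.integral_of_le (by norm_num : -(1:ℝ)/2 ≤ 1/2),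
        setIntegral_indicator measurableSet_Ici]
      have hset : Set.Ioc (-(1:ℝ)/2) (1/2) ∩ Set.Ici 0 = Set.Icc (0:ℝ) (1/2) := by
        ext x
        simp only [Set.mem_inter_iff, Set.mem_Ioc, Set.mem_Ici, Set.mem_Icc]
        constructor
        · rintro ⟨⟨_, h2⟩, h3⟩; exact ⟨h3, h2⟩
        · rintro ⟨h1, h2⟩; exact ⟨⟨by linarith, h2⟩, h1⟩
      rw [hset, setIntegral_const, Real.volume_real_Icc_of_le (by norm_num : (0:ℝ) ≤ 1/2)]
      rw [show ((1:ℝ)/2 - 0) = 1/2 by norm_num]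
      rw [smul_eq_mul, mul_pow, hs2]
      nlinarith
    · simp [abs_of_pos (mul_pos h2 hε)]
  refine le_antisymm (csSup_le ⟨_, hmem⟩ key) (le_csSup ⟨_, key⟩ hmem)
end

section
/- Let k₁ ≥ 0 and k₂ > 0, let f(t) = k₁ t + k₂ max(t, 0) on [-1/2,1/2], and let ε > 0 satisfy ε² ≤ (k₁+k₂)²/24. Then ω(ε, f, F_m) = (3(k₁+k₂))^{1/3} ε^{2/3}. -/
open MeasureTheory

lemma integral_sq_linear (c K a b : ℝ) :
    ∫ t in a..b, (c - K*t)^2 =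
      (c^2*b - c*K*b^2 + K^2*b^3/3) - (c^2*a - c*K*a^2 + K^2*a^3/3) := by
  have h : ∀ x ∈ Set.uIcc a b,
      HasDerivAt (fun t => c^2*t - c*K*t^2 + K^2*t^3/3) ((c - K*x)^2) x := by
    intro x _
    have h1 : HasDerivAt (fun t : ℝ => c^2*t - c*K*t^2 + K^2*t^3/3)
        (c^2*1 - c*K*(2*x^1) + K^2*(3*x^2)/3) x :=
      (((hasDerivAt_id x).const_mul (c^2)).sub
        ((hasDerivAt_pow 2 x).const_mul (c*K))).add
        (((hasDerivAt_pow 3 x).const_mul (K^2)).div_const 3)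
    convert h1 using 1; ring
  rw [intervalIntegral.integral_eq_sub_of_hasDerivAt h
    (Continuous.intervalIntegrable (by continuity) _ _)]

lemma sq_diff_integrable (g : ℝ → ℝ) (hg : MonotoneOn g (Set.Icc (-(1:ℝ)/2) (1/2)))
    (f : ℝ → ℝ) (hf : Continuous f) :
    IntervalIntegrable (fun t => (g t - f t)^2) volume (-(1:ℝ)/2) (1/2) := by
  have hab : (-(1:ℝ)/2) ≤ 1/2 := by norm_num
  have huIcc : Set.uIcc (-(1:ℝ)/2) (1/2) = Set.Icc (-(1:ℝ)/2) (1/2) := Set.uIcc_of_le hab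
  have hgi : IntervalIntegrable g volume (-(1:ℝ)/2) (1/2) :=
    MonotoneOn.intervalIntegrable (huIcc ▸ hg)
  obtain ⟨Cf, hCf⟩ := (isCompact_Icc (a := -(1:ℝ)/2) (b := 1/2)).exists_bound_of_continuousOn
    hf.continuousOn
  set B : ℝ := max |g (-(1:ℝ)/2)| |g (1/2)| + Cf with hB
  rw [intervalIntegrable_iff] at hgi ⊢
  have huIoc : Set.uIoc (-(1:ℝ)/2) (1/2) = Set.Ioc (-(1:ℝ)/2) (1/2) := Set.uIoc_of_le hab
  apply Integrable.mono' (g := fun _ => B^2)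
  · exact integrableOn_const (by rw [huIoc]; exact measure_Ioc_lt_top.ne)
  · exact ((hgi.aestronglyMeasurable.sub hf.aestronglyMeasurable).pow 2)
  · rw [ae_restrict_iff' measurableSet_uIoc]
    refine Filter.Eventually.of_forall (fun t ht => ?_)
    rw [huIoc] at ht
    have htIcc : t ∈ Set.Icc (-(1:ℝ)/2) (1/2) := Set.Ioc_subset_Icc_self ht
    have h1 : g (-(1:ℝ)/2) ≤ g t := hg (Set.left_mem_Icc.2 hab) htIcc htIcc.1
    have h2 : g t ≤ g (1/2) := hg htIcc (Set.right_mem_Icc.2 hab) htIcc.2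
    have h3 : |g t| ≤ max |g (-(1:ℝ)/2)| |g (1/2)| := by
      rw [abs_le]
      constructor
      · exact le_trans (neg_le_neg (le_max_left _ _)) (le_trans (neg_abs_le _) h1)
      · exact le_trans h2 (le_trans (le_abs_self _) (le_max_right _ _))
    have h4 : |f t| ≤ Cf := hCf t htIcc
    have h5 : |g t - f t| ≤ B := by
      calc |g t - f t| ≤ |g t| + |f t| := abs_sub _ _
        _ ≤ B := add_le_add h3 h4
    have : ‖(g t - f t)^2‖ = |g t - f t|^2 := by
      rw [Real.norm_eq_abs, abs_pow]
    rw [this]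
    exact pow_le_pow_left₀ (abs_nonneg _) h5 2


set_option maxHeartbeats 1000000 in
/-- Example 2 (r = 1, monotone class) of Cai, Low and Xia (2013): for
`f t = k₁ t + k₂ max(t, 0)` with `k₁ ≥ 0`, `k₂ > 0` and `ε² ≤ (k₁+k₂)²/24`, the local
modulus over the monotone class equals `(3(k₁+k₂))^{1/3} ε^{2/3}`. -/
theorem modulus_kink_monotone
    (k₁ k₂ ε : ℝ) (hk₁ : 0 ≤ k₁) (hk₂ : 0 < k₂) (hε : 0 < ε)
    (hε2 : ε^2 ≤ (k₁ + k₂)^2/24) :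
    omegaMonotone ε (fun t => k₁ * t + k₂ * max t 0)
      = (3*(k₁ + k₂)) ^ ((1:ℝ)/3) * ε ^ ((2:ℝ)/3) := by
  have hk : 0 < k₁ + k₂ := by linarith
  obtain ⟨k, hkdef⟩ : ∃ k : ℝ, k = k₁ + k₂ := ⟨_, rfl⟩
  rw [← hkdef] at hε2 ⊢
  rw [← hkdef] at hk
  obtain ⟨f, hfdef⟩ : ∃ f : ℝ → ℝ, f = fun t => k₁ * t + k₂ * max t 0 := ⟨_, rfl⟩
  rw [show (fun t => k₁ * t + k₂ * max t 0) = f from hfdef.symm]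
  have hfc : Continuous f := by
    rw [hfdef]; exact (continuous_const.mul continuous_id).add
      (continuous_const.mul (continuous_id.max continuous_const))
  obtain ⟨d, hddef⟩ : ∃ d : ℝ, d = (3*k) ^ ((1:ℝ)/3) * ε ^ ((2:ℝ)/3) := ⟨_, rfl⟩
  rw [← hddef]
  have hd0 : 0 < d := by
    rw [hddef]
    exact mul_pos (Real.rpow_pos_of_pos (by linarith) _) (Real.rpow_pos_of_pos hε _)
  have hd3 : d^3 = 3*k*ε^2 := by
    rw [hddef, mul_pow, ← Real.rpow_natCast ((3*k) ^ ((1:ℝ)/3)) 3,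
      ← Real.rpow_natCast (ε ^ ((2:ℝ)/3)) 3,
      ← Real.rpow_mul (by linarith : (0:ℝ) ≤ 3*k), ← Real.rpow_mul hε.le]
    norm_num
  have h8 : (2*d)^3 ≤ k^3 := by nlinarith [hd3, mul_le_mul_of_nonneg_left hε2 hk.le]
  have hdk : 2*d ≤ k := by
    by_contra h
    push_neg at h
    exact absurd h8 (not_le.2 (pow_lt_pow_left₀ h hk.le (by norm_num)))
  obtain ⟨m, hmdef⟩ : ∃ m : ℝ, m = d/k := ⟨_, rfl⟩
  have hkm : k*m = d := by rw [hmdef]; field_simp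
  have hm0 : 0 < m := by rw [hmdef]; exact div_pos hd0 hk
  have hm2 : m ≤ 1/2 := by rw [hmdef, div_le_iff₀ hk]; linarith
  have hmhalf : -(1:ℝ)/2 ≤ -m := by linarith
  have hε2' : ε^2 = d^2*m/3 := by
    have h1 : d^3 = d^2*(k*m) := by rw [hkm]; ring
    nlinarith [hd3, hk]
  have hf0 : f 0 = 0 := by rw [hfdef]; simp
  have habI : (-(1:ℝ)/2) ≤ 1/2 := by norm_num
  -- the witness function
  obtain ⟨g₀, hg₀def⟩ : ∃ g₀ : ℝ → ℝ, g₀ = fun t => if t < 0 then k₁ * t else max (k*t) d :=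
    ⟨_, rfl⟩
  have hg₀mono : MonotoneOn g₀ (Set.Icc (-(1:ℝ)/2) (1/2)) := by
    intro s _ t _ hst
    simp only [hg₀def]
    by_cases hs0 : s < 0
    · by_cases ht0 : t < 0
      · simp only [if_pos hs0, if_pos ht0]
        exact mul_le_mul_of_nonneg_left hst hk₁
      · simp only [if_pos hs0, if_neg ht0]
        exact le_trans (by nlinarith : k₁*s ≤ (0:ℝ)) (le_trans hd0.le (le_max_right _ _))
    · have ht0 : ¬ t < 0 := fun h => hs0 (lt_of_le_of_lt hst h)
      simp only [if_neg hs0, if_neg ht0]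
      exact max_le_max (mul_le_mul_of_nonneg_left hst hk.le) le_rfl
  have hg₀0 : g₀ 0 = d := by
    rw [hg₀def]; simp [max_eq_right hd0.le]
  -- integral of the witness
  have hI₀ : IntervalIntegrable (fun t => (g₀ t - f t)^2) volume (-(1:ℝ)/2) (1/2) :=
    sq_diff_integrable g₀ hg₀mono f hfc
  have hsubI : ∀ a b : ℝ, a ∈ Set.Icc (-(1:ℝ)/2) (1/2) → b ∈ Set.Icc (-(1:ℝ)/2) (1/2) →
      IntervalIntegrable (fun t => (g₀ t - f t)^2) volume a b := by
    intro a b ha hb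
    refine hI₀.mono_set (Set.uIcc_subset_uIcc ?_ ?_)
    · rwa [Set.uIcc_of_le habI]
    · rwa [Set.uIcc_of_le habI]
  have hmne : ∀ᵐ x : ℝ, x ≠ (0:ℝ) := by
    rw [ae_iff]
    simp only [ne_eq, not_not, Set.setOf_eq_eq_singleton]
    exact measure_singleton 0
  have e1 : (∫ t in (-(1:ℝ)/2)..0, (g₀ t - f t)^2) = 0 := by
    have h : ∀ᵐ x : ℝ, x ∈ Set.uIoc (-(1:ℝ)/2) 0 → (g₀ x - f x)^2 = (fun _ => (0:ℝ)) x := by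
      filter_upwards [hmne] with x hx hmem
      rw [Set.uIoc_of_le (by norm_num : (-(1:ℝ)/2) ≤ 0)] at hmem
      have hx0 : x < 0 := lt_of_le_of_ne hmem.2 hx
      simp only [hg₀def, hfdef]
      simp [if_pos hx0, max_eq_right hx0.le]
    rw [intervalIntegral.integral_congr_ae h, intervalIntegral.integral_const]
    simp
  have e3 : (∫ t in m..(1/2:ℝ), (g₀ t - f t)^2) = 0 := by
    have h : Set.EqOn (fun t => (g₀ t - f t)^2) (fun _ => (0:ℝ)) (Set.uIcc m (1/2)) := by
      intro t ht
      rw [Set.uIcc_of_le hm2] at ht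
      have ht0 : (0:ℝ) ≤ t := le_trans hm0.le ht.1
      have h1 : ¬ t < 0 := not_lt.2 ht0
      have h2 : max (k*t) d = k*t := max_eq_left (by nlinarith [ht.1])
      simp only [hg₀def, hfdef]
      simp only [if_neg h1, h2, max_eq_left ht0]
      rw [hkdef]; ring
    rw [intervalIntegral.integral_congr h, intervalIntegral.integral_const]
    simp
  have e2 : (∫ t in (0:ℝ)..m, (g₀ t - f t)^2) = ε^2 := by
    have h : Set.EqOn (fun t => (g₀ t - f t)^2) (fun t => (d - k*t)^2) (Set.uIcc 0 m) := by
      intro t ht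
      rw [Set.uIcc_of_le hm0.le] at ht
      have h1 : ¬ t < 0 := not_lt.2 ht.1
      have h2 : max (k*t) d = d := max_eq_right (by nlinarith [ht.2])
      simp only [hg₀def, hfdef]
      simp only [if_neg h1, h2, max_eq_left ht.1]
      rw [hkdef]; ring
    rw [intervalIntegral.integral_congr h, integral_sq_linear]
    rw [hε2']
    linear_combination (d*m/3 - d*m + k*m^2/3) * hkm
  have hint : (∫ t in (-(1:ℝ)/2)..(1/2:ℝ), (g₀ t - f t)^2) = ε^2 := by
    have hmem0 : (0:ℝ) ∈ Set.Icc (-(1:ℝ)/2) (1/2) := by constructor <;> norm_num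
    have hmemm : m ∈ Set.Icc (-(1:ℝ)/2) (1/2) := ⟨by linarith, hm2⟩
    have hmeml : (-(1:ℝ)/2) ∈ Set.Icc (-(1:ℝ)/2) (1/2) := by constructor <;> norm_num
    have hmemr : (1/2:ℝ) ∈ Set.Icc (-(1:ℝ)/2) (1/2) := by constructor <;> norm_num
    have hadd1 := intervalIntegral.integral_add_adjacent_intervals
      (hsubI _ _ hmeml hmem0) (hsubI _ _ hmem0 hmemm)
    have hadd2 := intervalIntegral.integral_add_adjacent_intervals
      (hsubI _ _ hmeml hmemm) (hsubI _ _ hmemm hmemr)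
    linarith [e1, e2, e3, hadd1, hadd2]
  have habs : |g₀ 0 - f 0| = d := by rw [hg₀0, hf0, sub_zero, abs_of_pos hd0]
  have hmem : d ∈ {x : ℝ | ∃ g : ℝ → ℝ, MonotoneOn g (Set.Icc (-(1:ℝ)/2) (1/2)) ∧
      (∫ t in (-(1:ℝ)/2)..(1/2), (g t - f t)^2) ≤ ε^2 ∧ x = |g 0 - f 0|} :=
    ⟨g₀, hg₀mono, le_of_eq hint, habs.symm⟩
  have hkk₁ : k₁ ≤ k := by rw [hkdef]; linarith
  have hub : ∀ x ∈ {x : ℝ | ∃ g : ℝ → ℝ, MonotoneOn g (Set.Icc (-(1:ℝ)/2) (1/2)) ∧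
      (∫ t in (-(1:ℝ)/2)..(1/2), (g t - f t)^2) ≤ ε^2 ∧ x = |g 0 - f 0|}, x ≤ d := by
    rintro x ⟨g, hmono, hgint, rfl⟩
    rw [hf0, sub_zero]
    have hI : IntervalIntegrable (fun t => (g t - f t)^2) volume (-(1:ℝ)/2) (1/2) :=
      sq_diff_integrable g hmono f hfc
    have hsub : ∀ a b : ℝ, a ∈ Set.Icc (-(1:ℝ)/2) (1/2) → b ∈ Set.Icc (-(1:ℝ)/2) (1/2) →
        IntervalIntegrable (fun t => (g t - f t)^2) volume a b := by
      intro a b ha hb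
      refine hI.mono_set (Set.uIcc_subset_uIcc ?_ ?_)
      · rwa [Set.uIcc_of_le habI]
      · rwa [Set.uIcc_of_le habI]
    have key : ∀ a b : ℝ, -(1:ℝ)/2 ≤ a → a ≤ b → b ≤ 1/2 →
        (∫ t in a..b, (g t - f t)^2) ≤ ε^2 := by
      intro a b ha hab hb
      have haI : a ∈ Set.Icc (-(1:ℝ)/2) (1/2) := ⟨ha, by linarith⟩
      have hbI : b ∈ Set.Icc (-(1:ℝ)/2) (1/2) := ⟨by linarith, hb⟩
      have h1 : 0 ≤ ∫ t in (-(1:ℝ)/2)..a, (g t - f t)^2 :=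
        intervalIntegral.integral_nonneg ha (fun u _ => sq_nonneg _)
      have h3 : 0 ≤ ∫ t in b..(1/2:ℝ), (g t - f t)^2 :=
        intervalIntegral.integral_nonneg hb (fun u _ => sq_nonneg _)
      have hadd1 := intervalIntegral.integral_add_adjacent_intervals
        (hsub _ _ (Set.left_mem_Icc.2 habI) haI) (hsub _ _ haI hbI)
      have hadd2 := intervalIntegral.integral_add_adjacent_intervals
        (hsub _ _ (Set.left_mem_Icc.2 habI) hbI) (hsub _ _ hbI (Set.right_mem_Icc.2 habI))
      linarith [hgint]
    have hmem0 : (0:ℝ) ∈ Set.Icc (-(1:ℝ)/2) (1/2) := by constructor <;> norm_num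
    have hmemm : m ∈ Set.Icc (-(1:ℝ)/2) (1/2) := ⟨by linarith, hm2⟩
    have hmemnm : -m ∈ Set.Icc (-(1:ℝ)/2) (1/2) := ⟨hmhalf, by linarith⟩
    rw [abs_le]
    constructor
    · -- -d ≤ g 0
      by_contra hcon
      push_neg at hcon
      obtain ⟨u, hudef⟩ : ∃ u : ℝ, u = -(g 0) := ⟨_, rfl⟩
      have hu : d < u := by rw [hudef]; linarith
      have hpt : ∀ t ∈ Set.Icc (-m) (0:ℝ), (u - (-k₁)*t)^2 ≤ (g t - f t)^2 := by
        intro t ht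
        have htI : t ∈ Set.Icc (-(1:ℝ)/2) (1/2) := ⟨le_trans hmhalf ht.1, by linarith [ht.2]⟩
        have h1 : g t ≤ g 0 := hmono htI hmem0 ht.2
        have h2 : f t = k₁ * t := by rw [hfdef]; simp [max_eq_right ht.2]
        have h3 : k₁*(-m) ≤ k₁*t := mul_le_mul_of_nonneg_left ht.1 hk₁
        have h4 : 0 ≤ u + k₁*t := by
          have h4' := mul_le_mul_of_nonneg_right hkk₁ hm0.le
          linarith [h3, h4', hkm, hu]
        have h5 : u + k₁*t ≤ f t - g t := by rw [h2, hudef]; linarith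
        calc (u - (-k₁)*t)^2 = (u + k₁*t)^2 := by ring
          _ ≤ (f t - g t)^2 := pow_le_pow_left₀ h4 h5 2
          _ = (g t - f t)^2 := by ring
      have hle : (∫ t in (-m)..(0:ℝ), (u - (-k₁)*t)^2) ≤
          ∫ t in (-m)..(0:ℝ), (g t - f t)^2 :=
        intervalIntegral.integral_mono_on (by linarith)
          (Continuous.intervalIntegrable
            ((continuous_const.sub (continuous_const.mul continuous_id)).pow 2) _ _)
          (hsub _ _ hmemnm hmem0) hpt
      rw [integral_sq_linear] at hle
      have hkey := key (-m) 0 hmhalf (by linarith) (by norm_num)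
      have hle' : u^2*m - u*k₁*m^2 + k₁^2*m^3/3 ≤ ε^2 := by
        have hexp : (u^2*(0:ℝ) - u*(-k₁)*0^2 + (-k₁)^2*0^3/3) -
            (u^2*(-m) - u*(-k₁)*(-m)^2 + (-k₁)^2*(-m)^3/3)
            = u^2*m - u*k₁*m^2 + k₁^2*m^3/3 := by ring
        rw [hexp] at hle
        linarith [hle, hkey]
      have hd2m : d^2*m = k^2*m^3 := by rw [← hkm]; ring
      have hpos2 : 0 < u + k*m - k₁*m := by
        have h4' := mul_le_mul_of_nonneg_right hkk₁ hm0.le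
        have h4'' := mul_pos hk hm0
        linarith [hkm, hu]
      have hukm : k*m < u := by rw [hkm]; exact hu
      have hIneq1 : u^2*m - u*k₁*m^2 > k^2*m^3 - k₁*k*m^3 := by
        linarith [mul_pos hm0 (mul_pos (sub_pos.2 hukm) hpos2)]
      have hIneq2 : k^2*m^3 - k₁*k*m^3 + k₁^2*m^3/3 ≥ k^2*m^3/3 := by
        have hq : 0 ≤ (2*k - k₁)*(k - k₁) :=
          mul_nonneg (by linarith) (by linarith)
        linarith [mul_nonneg (mul_nonneg (mul_nonneg hm0.le hm0.le) hm0.le) hq]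
      linarith [hle', hIneq1, hIneq2, hd2m, hε2']
    · -- g 0 ≤ d
      by_contra hcon
      push_neg at hcon
      have hpt : ∀ t ∈ Set.Icc (0:ℝ) m, (g 0 - k*t)^2 ≤ (g t - f t)^2 := by
        intro t ht
        have htI : t ∈ Set.Icc (-(1:ℝ)/2) (1/2) := ⟨by linarith [ht.1], le_trans ht.2 hm2⟩
        have h1 : g 0 ≤ g t := hmono hmem0 htI ht.1
        have h2 : f t = k * t := by rw [hfdef, hkdef]; simp [max_eq_left ht.1]; ring
        have h3 : k*t ≤ d := by rw [← hkm]; exact mul_le_mul_of_nonneg_left ht.2 hk.le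
        have h4 : 0 ≤ g 0 - k*t := by linarith
        have h5 : g 0 - k*t ≤ g t - f t := by rw [h2]; linarith
        exact pow_le_pow_left₀ h4 h5 2
      have hle : (∫ t in (0:ℝ)..m, (g 0 - k*t)^2) ≤ ∫ t in (0:ℝ)..m, (g t - f t)^2 :=
        intervalIntegral.integral_mono_on hm0.le
          (Continuous.intervalIntegrable
            ((continuous_const.sub (continuous_const.mul continuous_id)).pow 2) _ _)
          (hsub _ _ hmem0 hmemm) hpt
      rw [integral_sq_linear] at hle
      have hkey := key 0 m (by norm_num) hm0.le hm2
      have hd2m : d^2*m = k^2*m^3 := by rw [← hkm]; ring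
      have hcdm : (g 0)*k*m^2 = (g 0)*d*m := by rw [← hkm]; ring
      linarith [hle, hkey, hε2', hd2m, hcdm,
        mul_pos (mul_pos hm0 (lt_trans hd0 hcon)) (sub_pos.2 hcon)]
  have bdd : BddAbove {x : ℝ | ∃ g : ℝ → ℝ, MonotoneOn g (Set.Icc (-(1:ℝ)/2) (1/2)) ∧
      (∫ t in (-(1:ℝ)/2)..(1/2), (g t - f t)^2) ≤ ε^2 ∧ x = |g 0 - f 0|} :=
    ⟨d, fun x hx => hub x hx⟩
  exact le_antisymm (Real.sSup_le hub hd0.le) (le_csSup bdd hmem)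
end

section
/- Let k > 0, let r be an odd positive integer, let f(t) = k t^r on [-1/2,1/2], and let ε > 0 satisfy ε² ≤ (1/2)^{2r+1} k² · 2r²/((r+1)(2r+1)). Then ω(ε, f, F_m) = ((r+1)(2r+1)/(2r²))^{r/(2r+1)} k^{1/(2r+1)} ε^{2r/(2r+1)}. -/
open MeasureTheory

/-- Antiderivative formula for the squared-difference integrand. -/
lemma integral_sub_pow_sq (a k : ℝ) (r : ℕ) (s u : ℝ) :
    ∫ t in s..u, (a - k * t ^ r)^2
      = (a^2*u - 2*a*k*u^(r+1)/((r:ℝ)+1) + k^2*u^(2*r+1)/(2*(r:ℝ)+1))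
        - (a^2*s - 2*a*k*s^(r+1)/((r:ℝ)+1) + k^2*s^(2*r+1)/(2*(r:ℝ)+1)) := by
  have hr1 : ((r:ℝ)+1) ≠ 0 := by positivity
  have hr2 : (2*(r:ℝ)+1) ≠ 0 := by positivity
  have h : ∀ x ∈ Set.uIcc s u, HasDerivAt
      (fun t => a^2*t - 2*a*k*t^(r+1)/((r:ℝ)+1) + k^2*t^(2*r+1)/(2*(r:ℝ)+1))
      ((a - k*x^r)^2) x := by
    intro x _
    have h1 : HasDerivAt (fun t:ℝ => t^(r+1)) (((r:ℝ)+1)*x^r) x := by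
      have := hasDerivAt_pow (r+1) x
      simpa [Nat.cast_add] using this
    have h2 : HasDerivAt (fun t:ℝ => t^(2*r+1)) ((2*(r:ℝ)+1)*x^(2*r)) x := by
      have := hasDerivAt_pow (2*r+1) x
      push_cast at this
      simpa using this
    have h3 := (((hasDerivAt_id x).const_mul (a^2)).sub
        ((h1.const_mul (2*a*k)).div_const ((r:ℝ)+1))).add
        ((h2.const_mul (k^2)).div_const (2*(r:ℝ)+1))
    convert h3 using 1
    · rfl
    · rfl
    · rfl
    · field_simp
      ring
  rw [intervalIntegral.integral_eq_sub_of_hasDerivAt h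
    ((Continuous.intervalIntegrable (by continuity) s u))]

/-- Integral over `[0,c]`. -/
lemma integral_pos_side (a k c : ℝ) (r : ℕ) (hr1 : 1 ≤ r) :
    ∫ t in (0:ℝ)..c, (a - k*t^r)^2
      = a^2*c - 2*a*k*c^(r+1)/((r:ℝ)+1) + k^2*c^(2*r+1)/(2*(r:ℝ)+1) := by
  rw [integral_sub_pow_sq]
  have h0 : (0:ℝ)^(r+1) = 0 := zero_pow (by omega)
  have h0' : (0:ℝ)^(2*r+1) = 0 := zero_pow (by omega)
  rw [h0, h0']
  ring

/-- Integral over `[-c,0]`, for odd `r`. -/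
lemma integral_neg_side (b k c : ℝ) (r : ℕ) (hrodd : Odd r) (hr1 : 1 ≤ r) :
    ∫ t in (-c)..(0:ℝ), ((-b) - k*t^r)^2
      = b^2*c - 2*b*k*c^(r+1)/((r:ℝ)+1) + k^2*c^(2*r+1)/(2*(r:ℝ)+1) := by
  rw [integral_sub_pow_sq]
  have h1 : (-c)^(r+1) = c^(r+1) := (hrodd.add_one).neg_pow c
  have h2 : (-c)^(2*r+1) = -(c^(2*r+1)) := Odd.neg_pow ⟨r, by ring⟩ c
  have h0 : (0:ℝ)^(r+1) = 0 := zero_pow (by omega)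
  have h0' : (0:ℝ)^(2*r+1) = 0 := zero_pow (by omega)
  rw [h1, h2, h0, h0']
  ring

/-- Value of the minimal-distance integral expression at `a = k c^r`. -/
lemma I_value (k c : ℝ) (r : ℕ) :
    (k*c^r)^2*c - 2*(k*c^r)*k*c^(r+1)/((r:ℝ)+1) + k^2*c^(2*r+1)/(2*(r:ℝ)+1)
      = k^2 * c^(2*r+1) * (2*(r:ℝ)^2/(((r:ℝ)+1)*(2*(r:ℝ)+1))) := by
  have hr1 : ((r:ℝ)+1) ≠ 0 := by positivity
  have hr2 : (2*(r:ℝ)+1) ≠ 0 := by positivity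
  have e1 : c^(2*r+1) = (c^r)^2 * c := by rw [pow_succ]; ring
  have e2 : c^(r+1) = c^r * c := pow_succ c r
  rw [e1, e2]
  field_simp
  ring

/-- Strict monotonicity of the minimal-distance integral expression in `a`. -/
lemma I_mono {k a c : ℝ} {r : ℕ} (hk : 0 < k) (hc : 0 < c) (hr1 : 1 ≤ r)
    (ha : k*c^r < a) :
    (k*c^r)^2*c - 2*(k*c^r)*k*c^(r+1)/((r:ℝ)+1) + k^2*c^(2*r+1)/(2*(r:ℝ)+1)
      < a^2*c - 2*a*k*c^(r+1)/((r:ℝ)+1) + k^2*c^(2*r+1)/(2*(r:ℝ)+1) := by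
  have hR : (1:ℝ) ≤ (r:ℝ) := by exact_mod_cast hr1
  have hRpos : (0:ℝ) < (r:ℝ)+1 := by linarith
  set M := k*c^r with hMdef
  have hM : 0 < M := by positivity
  have e2 : c^(r+1) = c^r * c := pow_succ c r
  set q := 2*k*c^(r+1)/((r:ℝ)+1) with hq
  have hq0 : 0 < q := by positivity
  have hqle : q ≤ M*c := by
    rw [hq, div_le_iff₀ hRpos, e2, hMdef]
    nlinarith [mul_pos (mul_pos hk (pow_pos hc r)) hc]
  have key : M^2*c - M*q < a^2*c - a*q := by
    nlinarith [mul_pos (sub_pos.2 ha) hc, mul_pos hM hc, sq_nonneg (a - M)]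
  have l1 : 2*(k*c^r)*k*c^(r+1)/((r:ℝ)+1) = M*q := by rw [hq, hMdef]; ring
  have l2 : 2*a*k*c^(r+1)/((r:ℝ)+1) = a*q := by rw [hq]; ring
  rw [l1, l2]
  linarith [key]

lemma c_pow (k ε : ℝ) (r : ℕ) (hk : 0 < k) (hε : 0 < ε) (hr1 : 1 ≤ r) :
    ((ε^2/((2*(r:ℝ)^2/(((r:ℝ)+1)*(2*(r:ℝ)+1)))*k^2)) ^ ((1:ℝ)/(2*(r:ℝ)+1))) ^ (2*r+1)
      = ε^2/((2*(r:ℝ)^2/(((r:ℝ)+1)*(2*(r:ℝ)+1)))*k^2) := by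
  have hR : (1:ℝ) ≤ (r:ℝ) := by exact_mod_cast hr1
  have hC : 0 < 2*(r:ℝ)^2/(((r:ℝ)+1)*(2*(r:ℝ)+1)) := by positivity
  have hx : 0 < ε^2/((2*(r:ℝ)^2/(((r:ℝ)+1)*(2*(r:ℝ)+1)))*k^2) := by positivity
  rw [← Real.rpow_natCast (_ ^ ((1:ℝ)/(2*(r:ℝ)+1))) (2*r+1), ← Real.rpow_mul hx.le]
  have : (1:ℝ)/(2*(r:ℝ)+1) * ((2*r+1 : ℕ):ℝ) = 1 := by
    push_cast
    field_simp
  rw [this, Real.rpow_one]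

lemma M_eq (k ε : ℝ) (r : ℕ) (hk : 0 < k) (hε : 0 < ε) (hr1 : 1 ≤ r) :
    k * (((ε^2/((2*(r:ℝ)^2/(((r:ℝ)+1)*(2*(r:ℝ)+1)))*k^2)) ^ ((1:ℝ)/(2*(r:ℝ)+1)))) ^ r
      = (((r:ℝ)+1)*(2*(r:ℝ)+1)/(2*(r:ℝ)^2)) ^ ((r:ℝ)/(2*(r:ℝ)+1))
          * k ^ ((1:ℝ)/(2*(r:ℝ)+1)) * ε ^ (2*(r:ℝ)/(2*(r:ℝ)+1)) := by
  have hR : (1:ℝ) ≤ (r:ℝ) := by exact_mod_cast hr1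
  have h2R : (0:ℝ) < 2*(r:ℝ)+1 := by linarith
  set C : ℝ := 2*(r:ℝ)^2/(((r:ℝ)+1)*(2*(r:ℝ)+1)) with hCdef
  set P : ℝ := ((r:ℝ)+1)*(2*(r:ℝ)+1)/(2*(r:ℝ)^2) with hPdef
  have hC : 0 < C := by rw [hCdef]; positivity
  have hP : 0 < P := by rw [hPdef]; positivity
  have hPC : P * C = 1 := by
    rw [hPdef, hCdef]
    field_simp
  have hx : 0 < ε^2/(C*k^2) := by positivity
  set c : ℝ := (ε^2/(C*k^2)) ^ ((1:ℝ)/(2*(r:ℝ)+1)) with hcdef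
  have hc : 0 < c := Real.rpow_pos_of_pos hx _
  have hc21 : c ^ (2*r+1) = ε^2/(C*k^2) := c_pow k ε r hk hε hr1
  have hn : 2*r+1 ≠ 0 := by omega
  refine (pow_left_strictMonoOn₀ hn).injOn ?_ ?_ ?_
  · exact Set.mem_setOf.2 (by positivity)
  · have : 0 ≤ P ^ ((r:ℝ)/(2*(r:ℝ)+1)) * k ^ ((1:ℝ)/(2*(r:ℝ)+1)) * ε ^ (2*(r:ℝ)/(2*(r:ℝ)+1)) := by
      positivity
    exact Set.mem_setOf.2 this
  have hpow : ∀ (y s : ℝ), 0 < y → (y ^ s) ^ (2*r+1) = y ^ (s * (2*(r:ℝ)+1)) := by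
    intro y s hy
    rw [← Real.rpow_natCast (y ^ s) (2*r+1), ← Real.rpow_mul hy.le]
    congr 1
    push_cast
    ring
  have e1 : (P ^ ((r:ℝ)/(2*(r:ℝ)+1))) ^ (2*r+1) = P ^ r := by
    rw [hpow P _ hP]
    have : (r:ℝ)/(2*(r:ℝ)+1) * (2*(r:ℝ)+1) = (r:ℝ) := by field_simp
    rw [this, Real.rpow_natCast]
  have e2 : (k ^ ((1:ℝ)/(2*(r:ℝ)+1))) ^ (2*r+1) = k := by
    rw [hpow k _ hk]
    have : (1:ℝ)/(2*(r:ℝ)+1) * (2*(r:ℝ)+1) = 1 := by field_simp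
    rw [this, Real.rpow_one]
  have e3 : (ε ^ (2*(r:ℝ)/(2*(r:ℝ)+1))) ^ (2*r+1) = (ε^2) ^ r := by
    rw [hpow ε _ hε]
    have : 2*(r:ℝ)/(2*(r:ℝ)+1) * (2*(r:ℝ)+1) = ((2*r : ℕ):ℝ) := by push_cast; field_simp
    rw [this, Real.rpow_natCast, pow_mul]
  rw [mul_pow, mul_pow, mul_pow, e1, e2, e3]
  have lhs : (c ^ r) ^ (2*r+1) = (c ^ (2*r+1)) ^ r := by
    rw [← pow_mul, ← pow_mul, Nat.mul_comm r (2*r+1)]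
  rw [lhs, hc21, div_pow]
  have hCk : (C * k^2) ^ r ≠ 0 := by positivity
  rw [mul_div_assoc', div_eq_iff hCk]
  have : P ^ r * C ^ r = 1 := by rw [← mul_pow, hPC, one_pow]
  linear_combination (-(k^(2*r+1) * (ε^2)^r)) * this

lemma phi_integrableOn {g f : ℝ → ℝ} (hf : Continuous f)
    (hg : MonotoneOn g (Set.Icc (-(1:ℝ)/2) (1/2))) :
    IntegrableOn (fun t => (g t - f t)^2) (Set.Icc (-(1:ℝ)/2) (1/2)) := by
  have hmeas : AEMeasurable g (volume.restrict (Set.Icc (-(1:ℝ)/2) (1/2))) :=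
    aemeasurable_restrict_of_monotoneOn measurableSet_Icc hg
  have hφmeas : AEMeasurable (fun t => (g t - f t)^2)
      (volume.restrict (Set.Icc (-(1:ℝ)/2) (1/2))) :=
    (hmeas.sub hf.aemeasurable).pow_const 2
  obtain ⟨Cf, hCf⟩ : ∃ C, ∀ x ∈ Set.Icc (-(1:ℝ)/2) (1/2), ‖f x‖ ≤ C :=
    isCompact_Icc.exists_bound_of_continuousOn hf.continuousOn
  set B := max |g (-(1:ℝ)/2)| |g (1/2)| with hB
  have hgb : ∀ t ∈ Set.Icc (-(1:ℝ)/2) (1/2), |g t| ≤ B := by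
    intro t ht
    exact abs_le_max_abs_abs
      (hg (Set.left_mem_Icc.2 (by norm_num)) ht ht.1)
      (hg ht (Set.right_mem_Icc.2 (by norm_num)) ht.2)
  refine Integrable.mono' (integrable_const ((B + Cf)^2)) hφmeas.aestronglyMeasurable ?_
  refine (ae_restrict_iff' measurableSet_Icc).2 (ae_of_all _ fun t ht => ?_)
  have h1 : |g t - f t| ≤ B + Cf := by
    calc |g t - f t| ≤ |g t| + |f t| := abs_sub _ _
    _ ≤ B + Cf := add_le_add (hgb t ht) (hCf t ht)
  have h2 : (g t - f t)^2 ≤ (B + Cf)^2 := by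
    rw [← sq_abs]
    exact pow_le_pow_left₀ (abs_nonneg _) h1 2
  calc ‖(g t - f t)^2‖ = (g t - f t)^2 := by
        rw [Real.norm_eq_abs, abs_of_nonneg (sq_nonneg _)]
  _ ≤ (B + Cf)^2 := h2

lemma phi_intervalIntegrable {g f : ℝ → ℝ} (hf : Continuous f)
    (hg : MonotoneOn g (Set.Icc (-(1:ℝ)/2) (1/2))) {p q : ℝ}
    (hp : p ∈ Set.Icc (-(1:ℝ)/2) (1/2)) (hq : q ∈ Set.Icc (-(1:ℝ)/2) (1/2)) :
    IntervalIntegrable (fun t => (g t - f t)^2) volume p q := by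
  rw [intervalIntegrable_iff]
  exact (phi_integrableOn hf hg).mono_set
    (Set.Ioc_subset_Icc_self.trans
      (Set.Icc_subset_Icc (le_min hp.1 hq.1) (max_le hp.2 hq.2)))

lemma subinterval_le {g f : ℝ → ℝ} (hf : Continuous f)
    (hg : MonotoneOn g (Set.Icc (-(1:ℝ)/2) (1/2))) {p q : ℝ}
    (hp : p ∈ Set.Icc (-(1:ℝ)/2) (1/2)) (hq : q ∈ Set.Icc (-(1:ℝ)/2) (1/2))
    (hpq : p ≤ q) :
    (∫ t in p..q, (g t - f t)^2) ≤ ∫ t in (-(1:ℝ)/2)..(1/2), (g t - f t)^2 := by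
  have hL : (-(1:ℝ)/2) ∈ Set.Icc (-(1:ℝ)/2) (1/2) := Set.left_mem_Icc.2 (by norm_num)
  have hRm : (1:ℝ)/2 ∈ Set.Icc (-(1:ℝ)/2) (1/2) := Set.right_mem_Icc.2 (by norm_num)
  have h1 := phi_intervalIntegrable hf hg hL hp
  have h2 := phi_intervalIntegrable hf hg hp hq
  have h3 := phi_intervalIntegrable hf hg hq hRm
  have h4 := phi_intervalIntegrable hf hg hp hRm
  have e1 := intervalIntegral.integral_add_adjacent_intervals h1 h4
  have e2 := intervalIntegral.integral_add_adjacent_intervals h2 h3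
  have n1 : 0 ≤ ∫ t in (-(1:ℝ)/2)..p, (g t - f t)^2 :=
    intervalIntegral.integral_nonneg hp.1 (fun u _ => sq_nonneg _)
  have n3 : 0 ≤ ∫ t in q..((1:ℝ)/2), (g t - f t)^2 :=
    intervalIntegral.integral_nonneg hq.2 (fun u _ => sq_nonneg _)
  linarith

set_option maxHeartbeats 1000000 in
/-- Example 3 of Cai, Low and Xia (2013): for `f t = k t^r` with `k > 0`, `r` an odd positive
integer, and `ε² ≤ (1/2)^{2r+1} k² · 2r²/((r+1)(2r+1))`, the local modulus over the monotone
class equals `((r+1)(2r+1)/(2r²))^{r/(2r+1)} k^{1/(2r+1)} ε^{2r/(2r+1)}`. -/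
theorem modulus_power_monotone
    (k ε : ℝ) (r : ℕ) (hk : 0 < k) (hr : Odd r) (hr1 : 1 ≤ r) (hε : 0 < ε)
    (hε2 : ε^2 ≤ ((1:ℝ)/2) ^ (2*r + 1) * k^2 * (2*(r:ℝ)^2/(((r:ℝ)+1)*(2*(r:ℝ)+1)))) :
    omegaMonotone ε (fun t => k * t ^ r)
      = (((r:ℝ)+1)*(2*(r:ℝ)+1)/(2*(r:ℝ)^2)) ^ ((r:ℝ)/(2*(r:ℝ)+1))
          * k ^ ((1:ℝ)/(2*(r:ℝ)+1)) * ε ^ (2*(r:ℝ)/(2*(r:ℝ)+1)) := by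
  have hR : (1:ℝ) ≤ (r:ℝ) := by exact_mod_cast hr1
  have h2R : (0:ℝ) < 2*(r:ℝ)+1 := by linarith
  set C : ℝ := 2*(r:ℝ)^2/(((r:ℝ)+1)*(2*(r:ℝ)+1)) with hCdef
  have hC : 0 < C := by rw [hCdef]; positivity
  have hx : 0 < ε^2/(C*k^2) := by positivity
  set c : ℝ := (ε^2/(C*k^2)) ^ ((1:ℝ)/(2*(r:ℝ)+1)) with hcdef
  have hc : 0 < c := Real.rpow_pos_of_pos hx _
  have hc21 : c ^ (2*r+1) = ε^2/(C*k^2) := by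
    rw [hcdef, hCdef]; exact c_pow k ε r hk hε hr1
  have hchalf : c ≤ 1/2 := by
    have hxle : ε^2/(C*k^2) ≤ ((1:ℝ)/2)^(2*r+1) := by
      rw [div_le_iff₀ (by positivity)]
      calc ε^2 ≤ ((1:ℝ)/2) ^ (2*r + 1) * k^2 * C := hε2
      _ = ((1:ℝ)/2)^(2*r+1) * (C * k^2) := by ring
    have h1 : c ≤ (((1:ℝ)/2)^(2*r+1)) ^ ((1:ℝ)/(2*(r:ℝ)+1)) := by
      rw [hcdef]
      exact Real.rpow_le_rpow hx.le hxle (by positivity)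
    have h2 : (((1:ℝ)/2)^(2*r+1) : ℝ) ^ ((1:ℝ)/(2*(r:ℝ)+1)) = 1/2 := by
      rw [← Real.rpow_natCast ((1:ℝ)/2) (2*r+1), ← Real.rpow_mul (by norm_num)]
      have : ((2*r+1 : ℕ):ℝ) * ((1:ℝ)/(2*(r:ℝ)+1)) = 1 := by push_cast; field_simp
      rw [this, Real.rpow_one]
    rw [h2] at h1
    exact h1
  set M : ℝ := k * c^r with hMdef
  have hM : 0 < M := by rw [hMdef]; positivity
  have hMrhs : M = (((r:ℝ)+1)*(2*(r:ℝ)+1)/(2*(r:ℝ)^2)) ^ ((r:ℝ)/(2*(r:ℝ)+1))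
      * k ^ ((1:ℝ)/(2*(r:ℝ)+1)) * ε ^ (2*(r:ℝ)/(2*(r:ℝ)+1)) := by
    rw [hMdef, hcdef, hCdef]; exact M_eq k ε r hk hε hr1
  -- the exact value of the extremal integral
  have hIval : ∫ t in (0:ℝ)..c, (M - k*t^r)^2 = ε^2 := by
    rw [integral_pos_side M k c r hr1, hMdef, I_value k c r, hc21, ← hCdef]
    field_simp
  have hf0 : k * (0:ℝ)^r = 0 := by
    rw [zero_pow (by omega : r ≠ 0)]; ring
  have hcont : Continuous (fun t : ℝ => k * t ^ r) := by fun_prop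
  have hL : (-(1:ℝ)/2) ∈ Set.Icc (-(1:ℝ)/2) (1/2) := Set.left_mem_Icc.2 (by norm_num)
  have h0mem : (0:ℝ) ∈ Set.Icc (-(1:ℝ)/2) (1/2) := by
    constructor <;> norm_num
  have hcmem : c ∈ Set.Icc (-(1:ℝ)/2) (1/2) := by
    constructor
    · linarith
    · linarith
  have hncmem : -c ∈ Set.Icc (-(1:ℝ)/2) (1/2) := by
    constructor
    · norm_num; linarith
    · linarith
  -- upper bound for every element of the set
  have hub : ∀ d ∈ {d : ℝ | ∃ g : ℝ → ℝ, MonotoneOn g (Set.Icc (-(1:ℝ)/2) (1/2)) ∧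
      (∫ t in (-(1:ℝ)/2)..(1/2), (g t - (fun t => k * t ^ r) t)^2) ≤ ε^2 ∧
      d = |g 0 - (fun t => k * t ^ r) 0|}, d ≤ M := by
    rintro d ⟨g, hmono, hint, rfl⟩
    simp only at hint ⊢
    rw [hf0, sub_zero]
    by_contra habs
    push_neg at habs
    have habs' : M < |g 0| := habs
    rcases le_or_gt 0 (g 0) with hpos | hneg
    · -- positive case
      rw [abs_of_nonneg hpos] at habs'
      have hlow : ∫ t in (0:ℝ)..c, (g 0 - k*t^r)^2 ≤ ∫ t in (0:ℝ)..c, (g t - k*t^r)^2 := by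
        refine intervalIntegral.integral_mono_on hc.le
          (Continuous.intervalIntegrable (by fun_prop) _ _)
          (phi_intervalIntegrable hcont hmono h0mem hcmem) ?_
        intro t ht
        have htmem : t ∈ Set.Icc (-(1:ℝ)/2) (1/2) := ⟨by linarith [ht.1], le_trans ht.2 hchalf⟩
        have hgt : g 0 ≤ g t := hmono h0mem htmem ht.1
        have htr : k * t^r ≤ M := by
          rw [hMdef]
          have : t^r ≤ c^r := pow_le_pow_left₀ ht.1 ht.2 r
          nlinarith
        have h1 : 0 ≤ g 0 - k*t^r := by linarith
        have h2 : g 0 - k*t^r ≤ g t - k*t^r := by linarith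
        exact pow_le_pow_left₀ h1 h2 2
      have hstrict : ε^2 < ∫ t in (0:ℝ)..c, (g 0 - k*t^r)^2 := by
        rw [integral_pos_side (g 0) k c r hr1, ← hIval, integral_pos_side M k c r hr1, hMdef]
        exact I_mono hk hc hr1 (by rw [← hMdef]; exact habs')
      have htot : (∫ t in (0:ℝ)..c, (g t - k*t^r)^2)
          ≤ ∫ t in (-(1:ℝ)/2)..(1/2), (g t - k*t^r)^2 :=
        subinterval_le hcont hmono h0mem hcmem hc.le
      linarith
    · -- negative case
      rw [abs_of_neg hneg] at habs'
      set b : ℝ := -(g 0) with hbdef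
      have hb : M < b := habs'
      have hg0 : g 0 = -b := by rw [hbdef]; ring
      have hlow : ∫ t in (-c)..(0:ℝ), ((-b) - k*t^r)^2
          ≤ ∫ t in (-c)..(0:ℝ), (g t - k*t^r)^2 := by
        refine intervalIntegral.integral_mono_on (by linarith)
          (Continuous.intervalIntegrable (by fun_prop) _ _)
          (phi_intervalIntegrable hcont hmono hncmem h0mem) ?_
        intro t ht
        have htmem : t ∈ Set.Icc (-(1:ℝ)/2) (1/2) := ⟨by linarith [ht.1, hncmem.1], by linarith [ht.2]⟩
        have hgt : g t ≤ g 0 := hmono htmem h0mem ht.2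
        have htr : -M ≤ k * t^r := by
          rw [hMdef]
          have h1 : (-c)^r ≤ t^r := (Odd.strictMono_pow hr).monotone ht.1
          have h2 : (-c)^r = -(c^r) := Odd.neg_pow hr c
          nlinarith [h1, h2]
        have h1 : (-b) - k*t^r < 0 := by linarith
        have h2 : g t - k*t^r ≤ (-b) - k*t^r := by rw [hg0] at hgt; linarith
        nlinarith [mul_nonneg (by linarith : (0:ℝ) ≤ ((-b) - k*t^r) - (g t - k*t^r))
          (by linarith : (0:ℝ) ≤ -((g t - k*t^r) + ((-b) - k*t^r)))]
      have hstrict : ε^2 < ∫ t in (-c)..(0:ℝ), ((-b) - k*t^r)^2 := by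
        rw [integral_neg_side b k c r hr hr1, ← hIval, integral_pos_side M k c r hr1, hMdef]
        exact I_mono hk hc hr1 (by rw [← hMdef]; exact hb)
      have htot : (∫ t in (-c)..(0:ℝ), (g t - k*t^r)^2)
          ≤ ∫ t in (-(1:ℝ)/2)..(1/2), (g t - k*t^r)^2 :=
        subinterval_le hcont hmono hncmem h0mem (by linarith)
      linarith
  -- the extremal function attains the bound
  have hmem : M ∈ {d : ℝ | ∃ g : ℝ → ℝ, MonotoneOn g (Set.Icc (-(1:ℝ)/2) (1/2)) ∧
      (∫ t in (-(1:ℝ)/2)..(1/2), (g t - (fun t => k * t ^ r) t)^2) ≤ ε^2 ∧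
      M = |g 0 - (fun t => k * t ^ r) 0|} := by
    set gs : ℝ → ℝ := fun t => if t < 0 then k*t^r else max (k*t^r) M with hgs
    have hmono : Monotone gs := by
      intro s t hst
      have hpowmono : s^r ≤ t^r := (Odd.strictMono_pow hr).monotone hst
      have hfmono : k*s^r ≤ k*t^r := by nlinarith
      by_cases hs : s < 0
      · by_cases ht : t < 0
        · simp only [hgs, if_pos hs, if_pos ht]; exact hfmono
        · simp only [hgs, if_pos hs, if_neg ht]
          exact le_trans hfmono (le_max_left _ _)
      · have ht : ¬ t < 0 := by intro h; exact hs (lt_of_le_of_lt hst h)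
        simp only [hgs, if_neg hs, if_neg ht]
        exact max_le_max hfmono le_rfl
    refine ⟨gs, hmono.monotoneOn _, ?_, ?_⟩
    · -- the integral equals ε²
      simp only
      have hmemL := phi_intervalIntegrable (f := fun t => k*t^r) hcont
        (hmono.monotoneOn _) hL h0mem
      have hmemM := phi_intervalIntegrable (f := fun t => k*t^r) hcont
        (hmono.monotoneOn _) h0mem hcmem
      have hmemR := phi_intervalIntegrable (f := fun t => k*t^r) hcont
        (hmono.monotoneOn _) hcmem (Set.right_mem_Icc.2 (by norm_num))
      have e2 := intervalIntegral.integral_add_adjacent_intervals hmemM hmemR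
      have e1 := intervalIntegral.integral_add_adjacent_intervals hmemL
        (phi_intervalIntegrable (f := fun t => k*t^r) hcont (hmono.monotoneOn _)
          h0mem (Set.right_mem_Icc.2 (by norm_num)))
      -- piece 1 : ∫_{-1/2}^0 = 0
      have E1 : (∫ t in (-(1:ℝ)/2)..(0:ℝ), (gs t - k*t^r)^2) = 0 := by
        have hne : ∀ᵐ (t:ℝ), t ≠ 0 := by
          have h0 : ({0} : Set ℝ) = {t : ℝ | ¬ t ≠ 0} := by ext; simp
          rw [ae_iff, ← h0]
          exact measure_singleton 0
        rw [intervalIntegral.integral_congr_ae (g := fun _ => (0:ℝ))]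
        · exact intervalIntegral.integral_zero
        · filter_upwards [hne] with t hne0 hmem'
          have ht0 : t ≤ 0 := by
            rcases Set.mem_uIoc.1 hmem' with h | h
            · linarith [h.2]
            · linarith [h.2]
          have htneg : t < 0 := lt_of_le_of_ne ht0 hne0
          simp only [hgs, if_pos htneg]
          ring
      -- piece 2 : ∫_0^c = ε²
      have E2 : (∫ t in (0:ℝ)..c, (gs t - k*t^r)^2) = ε^2 := by
        rw [← hIval]
        refine intervalIntegral.integral_congr ?_
        intro t ht
        rw [Set.uIcc_of_le hc.le] at ht
        have ht0 : ¬ t < 0 := not_lt.2 ht.1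
        have htr : k*t^r ≤ M := by
          rw [hMdef]
          have : t^r ≤ c^r := pow_le_pow_left₀ ht.1 ht.2 r
          nlinarith
        simp only [hgs, if_neg ht0, max_eq_right htr]
      -- piece 3 : ∫_c^{1/2} = 0
      have E3 : (∫ t in c..((1:ℝ)/2), (gs t - k*t^r)^2) = 0 := by
        rw [intervalIntegral.integral_congr (g := fun _ => (0:ℝ))]
        · exact intervalIntegral.integral_zero
        · intro t ht
          rw [Set.uIcc_of_le hchalf] at ht
          have ht0 : ¬ t < 0 := not_lt.2 (by linarith [ht.1])
          have htr : M ≤ k*t^r := by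
            rw [hMdef]
            have : c^r ≤ t^r := pow_le_pow_left₀ hc.le ht.1 r
            nlinarith
          simp only [hgs, if_neg ht0, max_eq_left htr]
          ring
      rw [← e1, ← e2, E1, E2, E3]
      linarith
    · -- the value at 0
      simp only
      have h00 : ¬ (0:ℝ) < 0 := lt_irrefl 0
      simp only [hgs, if_neg h00, hf0, sub_zero]
      rw [max_eq_right hM.le, abs_of_pos hM]
  -- conclude
  rw [omegaMonotone, ← hMrhs]
  exact le_antisymm (csSup_le ⟨M, hmem⟩ hub) (le_csSup ⟨M, hub⟩ hmem)
end
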